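/- Auxiliary Lemma: if f and g are developed, r-less, δ-σ-less, diversified and s-normal arrow terms of M≡ of the same type A ⊢ B, then f = g in M≡. -/

import Mathlib

/-! Formalization of categories of proofs for linear equality (Dosen-Petric),
with the generality functor G into the category Br of Brauerian diagrams,
represented here by the matching relation on occurrences of variables. -/

namespace DP

/-- Formulae: atomic formulae `x R y` (for the binary predicate in question),
the constant true, and conjunctions. -/
inductive Fm (V : Type) : Type
  | rel : V → V → Fm V
  | top : Fm V
  | and : Fm V → Fm V → Fm V

/-- Occurrences of variables in a formula: `false`/`true` are respectively the
left-hand and right-hand occurrences of variables in an atomic formula. -/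
def Occ {V : Type} : Fm V → Type
  | .rel _ _ => Bool
  | .top => Empty
  | .and A B => Occ A ⊕ Occ B

/-- The matching relation on `source ⊕ target` induced by a relabelling function
from target occurrences to source occurrences. -/
def relabel {α β : Type} (φ : β → α) : α ⊕ β → α ⊕ β → Prop :=
  fun u v => (∃ o, u = Sum.inl (φ o) ∧ v = Sum.inr o) ∨
             (∃ o, u = Sum.inr o ∧ v = Sum.inl (φ o))

/-- The matching relation induced by a relabelling function from source occurrences
to target occurrences. -/
def corelabel {α β : Type} (ψ : α → β) : α ⊕ β → α ⊕ β → Prop :=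
  fun u v => (∃ o, u = Sum.inl o ∧ v = Sum.inr (ψ o)) ∨
             (∃ o, u = Sum.inr (ψ o) ∧ v = Sum.inl o)

/-- Horizontal (side-by-side) composition of Brauerian diagrams. -/
def tensRel {α β γ δ : Type}
    (p : α ⊕ β → α ⊕ β → Prop) (q : γ ⊕ δ → γ ⊕ δ → Prop) :
    (α ⊕ γ) ⊕ (β ⊕ δ) → (α ⊕ γ) ⊕ (β ⊕ δ) → Prop :=
  fun u v =>
    (∃ x y, p x y ∧ u = Sum.map Sum.inl Sum.inl x ∧ v = Sum.map Sum.inl Sum.inl y) ∨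
    (∃ x y, q x y ∧ u = Sum.map Sum.inr Sum.inr x ∧ v = Sum.map Sum.inr Sum.inr y)

/-- Vertical composition of Brauerian diagrams: two endpoints are matched in the
composite when they are joined by a path of edges through the middle points. -/
def compRel {α β γ : Type}
    (p : α ⊕ β → α ⊕ β → Prop) (q : β ⊕ γ → β ⊕ γ → Prop) :
    α ⊕ γ → α ⊕ γ → Prop :=
  fun u v => u ≠ v ∧
    Relation.ReflTransGen
      (fun s t : α ⊕ β ⊕ γ =>
        (∃ x y, p x y ∧ s = Sum.map (fun a => a) Sum.inl x ∧
                        t = Sum.map (fun a => a) Sum.inl y) ∨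
        (∃ x y, q x y ∧ s = Sum.inr x ∧ t = Sum.inr y))
      (Sum.map (fun a => a) Sum.inr u) (Sum.map (fun a => a) Sum.inr v)

/-- Arrow terms. -/
inductive Ar (V : Type) : Fm V → Fm V → Type
  | id (A : Fm V) : Ar V A A
  | comp {A B C : Fm V} : Ar V B C → Ar V A B → Ar V A C
  | tens {A B C D : Fm V} : Ar V A B → Ar V C D → Ar V (.and A C) (.and B D)
  | bto (A B C : Fm V) : Ar V (.and A (.and B C)) (.and (.and A B) C)
  | bfrom (A B C : Fm V) : Ar V (.and (.and A B) C) (.and A (.and B C))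
  | dto (A : Fm V) : Ar V (.and A .top) A
  | dfrom (A : Fm V) : Ar V A (.and A .top)
  | sto (A : Fm V) : Ar V (.and .top A) A
  | sfrom (A : Fm V) : Ar V A (.and .top A)
  | r (x : V) : Ar V .top (.rel x x)
  | t (x y z : V) : Ar V (.and (.rel x y) (.rel y z)) (.rel x z)
  | s (x y : V) : Ar V (.rel x y) (.rel y x)

/-- The Brauerian diagram (matching relation on occurrences of variables in
source and target) associated with an arrow term: the image under the functor G. -/
def GRel {V : Type} : ∀ {A B : Fm V}, Ar V A B → (Occ A ⊕ Occ B → Occ A ⊕ Occ B → Prop)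
  | _, _, .id _ => relabel (fun o => o)
  | _, _, .comp g f => compRel (GRel f) (GRel g)
  | _, _, .tens f g => tensRel (GRel f) (GRel g)
  | _, _, .bto _ _ _ => relabel (fun o =>
      match o with
      | Sum.inl (Sum.inl a) => Sum.inl a
      | Sum.inl (Sum.inr b) => Sum.inr (Sum.inl b)
      | Sum.inr c => Sum.inr (Sum.inr c))
  | _, _, .bfrom _ _ _ => relabel (fun o =>
      match o with
      | Sum.inl a => Sum.inl (Sum.inl a)
      | Sum.inr (Sum.inl b) => Sum.inl (Sum.inr b)
      | Sum.inr (Sum.inr c) => Sum.inr c)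
  | _, _, .dto _ => relabel Sum.inl
  | _, _, .dfrom _ => corelabel Sum.inl
  | _, _, .sto _ => relabel Sum.inr
  | _, _, .sfrom _ => corelabel Sum.inr
  | _, _, .r _ => fun u v =>
      (u = Sum.inr false ∧ v = Sum.inr true) ∨ (u = Sum.inr true ∧ v = Sum.inr false)
  | _, _, .t _ _ _ => fun u v =>
      (u = Sum.inl (Sum.inl false) ∧ v = Sum.inr false) ∨
      (u = Sum.inr false ∧ v = Sum.inl (Sum.inl false)) ∨
      (u = Sum.inl (Sum.inr true) ∧ v = Sum.inr true) ∨
      (u = Sum.inr true ∧ v = Sum.inl (Sum.inr true)) ∨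
      (u = Sum.inl (Sum.inl true) ∧ v = Sum.inl (Sum.inr false)) ∨
      (u = Sum.inl (Sum.inr false) ∧ v = Sum.inl (Sum.inl true))
  | _, _, .s _ _ => relabel (fun o => !o)

/-- Equality of arrow terms: the smallest congruence generated by the defining
equations of the category. -/
inductive Eqv {V : Type} : ∀ {A B : Fm V}, Ar V A B → Ar V A B → Prop
  | refl {A B : Fm V} (f : Ar V A B) : Eqv f f
  | symm {A B : Fm V} {f g : Ar V A B} : Eqv f g → Eqv g f
  | trans {A B : Fm V} {f g h : Ar V A B} : Eqv f g → Eqv g h → Eqv f h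
  | congr_comp {A B C : Fm V} {g g' : Ar V B C} {f f' : Ar V A B} :
      Eqv g g' → Eqv f f' → Eqv (g.comp f) (g'.comp f')
  | congr_tens {A B C D : Fm V} {f f' : Ar V A B} {g g' : Ar V C D} :
      Eqv f f' → Eqv g g' → Eqv (f.tens g) (f'.tens g')
  | id_comp {A B : Fm V} (f : Ar V A B) : Eqv ((Ar.id B).comp f) f
  | comp_id {A B : Fm V} (f : Ar V A B) : Eqv (f.comp (Ar.id A)) f
  | comp_assoc {A B C D : Fm V} (h : Ar V C D) (g : Ar V B C) (f : Ar V A B) :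
      Eqv ((h.comp g).comp f) (h.comp (g.comp f))
  | tens_id (A B : Fm V) : Eqv ((Ar.id A).tens (Ar.id B)) (Ar.id (.and A B))
  | tens_comp {A1 B1 C1 A2 B2 C2 : Fm V} (g1 : Ar V B1 C1) (f1 : Ar V A1 B1)
      (g2 : Ar V B2 C2) (f2 : Ar V A2 B2) :
      Eqv ((g1.comp f1).tens (g2.comp f2)) ((g1.tens g2).comp (f1.tens f2))
  | nat_b {A B C D E F : Fm V} (f : Ar V A D) (g : Ar V B E) (h : Ar V C F) :
      Eqv (((f.tens g).tens h).comp (Ar.bto A B C)) ((Ar.bto D E F).comp (f.tens (g.tens h)))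
  | nat_d {A D : Fm V} (f : Ar V A D) :
      Eqv (f.comp (Ar.dto A)) ((Ar.dto D).comp (f.tens (Ar.id .top)))
  | nat_s {A D : Fm V} (f : Ar V A D) :
      Eqv (f.comp (Ar.sto A)) ((Ar.sto D).comp ((Ar.id .top).tens f))
  | bb1 (A B C : Fm V) : Eqv ((Ar.bfrom A B C).comp (Ar.bto A B C)) (Ar.id (.and A (.and B C)))
  | bb2 (A B C : Fm V) : Eqv ((Ar.bto A B C).comp (Ar.bfrom A B C)) (Ar.id (.and (.and A B) C))
  | dd1 (A : Fm V) : Eqv ((Ar.dfrom A).comp (Ar.dto A)) (Ar.id (.and A .top))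
  | dd2 (A : Fm V) : Eqv ((Ar.dto A).comp (Ar.dfrom A)) (Ar.id A)
  | ss1 (A : Fm V) : Eqv ((Ar.sfrom A).comp (Ar.sto A)) (Ar.id (.and .top A))
  | ss2 (A : Fm V) : Eqv ((Ar.sto A).comp (Ar.sfrom A)) (Ar.id A)
  | pent (A B C D : Fm V) :
      Eqv ((Ar.bto (.and A B) C D).comp (Ar.bto A B (.and C D)))
        (((Ar.bto A B C).tens (Ar.id D)).comp
          ((Ar.bto A (.and B C) D).comp ((Ar.id A).tens (Ar.bto B C D))))
  | bds (A C : Fm V) :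
      Eqv (Ar.bto A .top C) (((Ar.dfrom A).tens (Ar.id C)).comp ((Ar.id A).tens (Ar.sto C)))
  | rtd (x y : V) :
      Eqv ((Ar.t x y y).comp ((Ar.id (.rel x y)).tens (Ar.r y))) (Ar.dto (.rel x y))
  | rts (x y : V) :
      Eqv ((Ar.t y y x).comp ((Ar.r y).tens (Ar.id (.rel y x)))) (Ar.sto (.rel y x))
  | tb (x y z u : V) :
      Eqv ((Ar.t x y u).comp ((Ar.id (.rel x y)).tens (Ar.t y z u)))
        ((Ar.t x z u).comp (((Ar.t x y z).tens (Ar.id (.rel z u))).comp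
          (Ar.bto (.rel x y) (.rel y z) (.rel z u))))
  | sseq (x y : V) : Eqv ((Ar.s y x).comp (Ar.s x y)) (Ar.id (.rel x y))
  | rs (x : V) : Eqv ((Ar.s x x).comp (Ar.r x)) (Ar.r x)

/-- Primitive non-identity arrow terms. -/
inductive Prim {V : Type} : ∀ {A B : Fm V}, Ar V A B → Prop
  | bto (A B C : Fm V) : Prim (Ar.bto A B C)
  | bfrom (A B C : Fm V) : Prim (Ar.bfrom A B C)
  | dto (A : Fm V) : Prim (Ar.dto A)
  | dfrom (A : Fm V) : Prim (Ar.dfrom A)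
  | sto (A : Fm V) : Prim (Ar.sto A)
  | sfrom (A : Fm V) : Prim (Ar.sfrom A)
  | r (x : V) : Prim (Ar.r x)
  | t (x y z : V) : Prim (Ar.t x y z)
  | s (x y : V) : Prim (Ar.s x y)

/-- 1-terms: identities padded by identities. -/
inductive OneTerm {V : Type} : ∀ {A B : Fm V}, Ar V A B → Prop
  | id (A : Fm V) : OneTerm (Ar.id A)
  | tensl (A : Fm V) {B C : Fm V} {f : Ar V B C} : OneTerm f → OneTerm ((Ar.id A).tens f)
  | tensr (A : Fm V) {B C : Fm V} {f : Ar V B C} : OneTerm f → OneTerm (f.tens (Ar.id A))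

/-- Headed arrow terms: β-terms for some primitive non-identity β. -/
inductive Headed {V : Type} : ∀ {A B : Fm V}, Ar V A B → Prop
  | prim {A B : Fm V} {f : Ar V A B} : Prim f → Headed f
  | tensl (A : Fm V) {B C : Fm V} {f : Ar V B C} : Headed f → Headed ((Ar.id A).tens f)
  | tensr (A : Fm V) {B C : Fm V} {f : Ar V B C} : Headed f → Headed (f.tens (Ar.id A))

/-- Factorized arrow terms all of whose factors are headed. -/
inductive HeadedSeq {V : Type} : ∀ {A B : Fm V}, Ar V A B → Prop
  | single {A B : Fm V} {f : Ar V A B} : Headed f → HeadedSeq f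
  | comp {A B C : Fm V} {g : Ar V B C} {f : Ar V A B} :
      HeadedSeq g → HeadedSeq f → HeadedSeq (g.comp f)

/-- Developed arrow terms: f_n ∘ … ∘ f_1 with f_1 a 1-term and all other
factors headed. -/
inductive Developed {V : Type} : ∀ {A B : Fm V}, Ar V A B → Prop
  | one {A B : Fm V} {f : Ar V A B} : OneTerm f → Developed f
  | comp {A B C : Fm V} {g : Ar V B C} {f : Ar V A B} :
      HeadedSeq g → Developed f → Developed (g.comp f)

/-- An arrow term is r-less when no `r` occurs in it. -/
def rLess {V : Type} : ∀ {A B : Fm V}, Ar V A B → Prop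
  | _, _, .r _ => False
  | _, _, .comp g f => rLess g ∧ rLess f
  | _, _, .tens f g => rLess f ∧ rLess g
  | _, _, _ => True

/-- An arrow term is δ-σ-less when none of δ→, δ←, σ→, σ← occurs in it. -/
def dsLess {V : Type} : ∀ {A B : Fm V}, Ar V A B → Prop
  | _, _, .dto _ => False
  | _, _, .dfrom _ => False
  | _, _, .sto _ => False
  | _, _, .sfrom _ => False
  | _, _, .comp g f => dsLess g ∧ dsLess f
  | _, _, .tens f g => dsLess f ∧ dsLess g
  | _, _, _ => True

/-- `topFree A` holds when ⊤ does not occur in A. -/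
def topFree {V : Type} : Fm V → Prop
  | .rel _ _ => True
  | .top => False
  | .and A B => topFree A ∧ topFree B

/-- Number of occurrences of the variable x in a formula. -/
def countF {V : Type} [DecidableEq V] (x : V) : Fm V → ℕ
  | .rel a b => (if a = x then 1 else 0) + (if b = x then 1 else 0)
  | .top => 0
  | .and A B => countF x A + countF x B

/-- A type A ⊢ B is diversified when every variable occurring in it occurs
exactly twice. -/
def Diversified {V : Type} [DecidableEq V] (A B : Fm V) : Prop :=
  ∀ x : V, countF x A + countF x B = 0 ∨ countF x A + countF x B = 2

/-- Number of occurrences of s with indices x,y or y,x in an arrow term. -/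
def countS {V : Type} [DecidableEq V] (x y : V) : ∀ {A B : Fm V}, Ar V A B → ℕ
  | _, _, .s a b => if (a = x ∧ b = y) ∨ (a = y ∧ b = x) then 1 else 0
  | _, _, .comp g f => countS x y g + countS x y f
  | _, _, .tens f g => countS x y f + countS x y g
  | _, _, _ => 0

/-- An arrow term is s-normal when for every pair of variables (x,y) there is at
most one occurrence of s in it with the indices x,y or y,x. -/
def sNormal {V : Type} [DecidableEq V] {A B : Fm V} (f : Ar V A B) : Prop :=
  ∀ x y : V, countS x y f ≤ 1


/-! ### Auxiliary development for stmt13 -/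

section Aux
variable {V : Type}

local infix:50 " ≋ " => Eqv

instance {A B : Fm V} : Trans (α := Ar V A B) Eqv Eqv Eqv := ⟨Eqv.trans⟩

namespace Eqv

theorem cl {A B C : Fm V} {g g' : Ar V B C} (f : Ar V A B) (h : g ≋ g') :
    g.comp f ≋ g'.comp f := h.congr_comp (Eqv.refl f)

theorem cr {A B C : Fm V} (g : Ar V B C) {f f' : Ar V A B} (h : f ≋ f') :
    g.comp f ≋ g.comp f' := (Eqv.refl g).congr_comp h

theorem tl {A B C D : Fm V} {f f' : Ar V A B} (g : Ar V C D) (h : f ≋ f') :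
    f.tens g ≋ f'.tens g := h.congr_tens (Eqv.refl g)

theorem tr {A B C D : Fm V} (f : Ar V A B) {g g' : Ar V C D} (h : g ≋ g') :
    f.tens g ≋ f.tens g' := (Eqv.refl f).congr_tens h

/-- interchange -/
theorem inter {A1 B1 C1 A2 B2 C2 : Fm V} (g1 : Ar V B1 C1) (f1 : Ar V A1 B1)
    (g2 : Ar V B2 C2) (f2 : Ar V A2 B2) :
    (g1.tens g2).comp (f1.tens f2) ≋ (g1.comp f1).tens (g2.comp f2) :=
  (Eqv.tens_comp g1 f1 g2 f2).symm

theorem cancel_right {A B C : Fm V} {x y : Ar V B C} {i : Ar V A B} {j : Ar V B A}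
    (hij : i.comp j ≋ Ar.id B) (h : x.comp i ≋ y.comp i) : x ≋ y := by
  have : (x.comp i).comp j ≋ (y.comp i).comp j := h.congr_comp (Eqv.refl j)
  calc x ≋ x.comp (Ar.id B) := (Eqv.comp_id x).symm
    _ ≋ x.comp (i.comp j) := cr x hij.symm
    _ ≋ (x.comp i).comp j := (Eqv.comp_assoc _ _ _).symm
    _ ≋ (y.comp i).comp j := this
    _ ≋ y.comp (i.comp j) := Eqv.comp_assoc _ _ _
    _ ≋ y.comp (Ar.id B) := cr y hij
    _ ≋ y := Eqv.comp_id y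

theorem cancel_left {A B C : Fm V} {x y : Ar V A B} {i : Ar V B C} {j : Ar V C B}
    (hji : j.comp i ≋ Ar.id B) (h : i.comp x ≋ i.comp y) : x ≋ y := by
  have h2 : j.comp (i.comp x) ≋ j.comp (i.comp y) := cr j h
  calc x ≋ (Ar.id B).comp x := (Eqv.id_comp x).symm
    _ ≋ (j.comp i).comp x := cl x hji.symm
    _ ≋ j.comp (i.comp x) := Eqv.comp_assoc _ _ _
    _ ≋ j.comp (i.comp y) := h2
    _ ≋ (j.comp i).comp y := (Eqv.comp_assoc _ _ _).symm
    _ ≋ (Ar.id B).comp y := cl y hji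
    _ ≋ y := Eqv.id_comp y

end Eqv

/-- naturality of bfrom, derived -/
theorem nat_bfrom {A B C D E F : Fm V} (f : Ar V A D) (g : Ar V B E) (h : Ar V C F) :
    (f.tens (g.tens h)).comp (Ar.bfrom A B C) ≋
      (Ar.bfrom D E F).comp ((f.tens g).tens h) := by
  have h1 : (Ar.bfrom D E F).comp (((f.tens g).tens h).comp (Ar.bto A B C)) ≋
      (f.tens (g.tens h)) := by
    calc (Ar.bfrom D E F).comp (((f.tens g).tens h).comp (Ar.bto A B C))
        ≋ (Ar.bfrom D E F).comp ((Ar.bto D E F).comp (f.tens (g.tens h))) :=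
          Eqv.cr _ (Eqv.nat_b f g h)
      _ ≋ ((Ar.bfrom D E F).comp (Ar.bto D E F)).comp (f.tens (g.tens h)) :=
          (Eqv.comp_assoc _ _ _).symm
      _ ≋ (Ar.id _).comp (f.tens (g.tens h)) := Eqv.cl _ (Eqv.bb1 D E F)
      _ ≋ f.tens (g.tens h) := Eqv.id_comp _
  calc (f.tens (g.tens h)).comp (Ar.bfrom A B C)
      ≋ ((Ar.bfrom D E F).comp (((f.tens g).tens h).comp (Ar.bto A B C))).comp
          (Ar.bfrom A B C) := Eqv.cl _ h1.symm
    _ ≋ (Ar.bfrom D E F).comp ((((f.tens g).tens h).comp (Ar.bto A B C)).comp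
          (Ar.bfrom A B C)) := Eqv.comp_assoc _ _ _
    _ ≋ (Ar.bfrom D E F).comp (((f.tens g).tens h).comp ((Ar.bto A B C).comp
          (Ar.bfrom A B C))) := Eqv.cr _ (Eqv.comp_assoc _ _ _)
    _ ≋ (Ar.bfrom D E F).comp (((f.tens g).tens h).comp (Ar.id _)) :=
          Eqv.cr _ (Eqv.cr _ (Eqv.bb2 A B C))
    _ ≋ (Ar.bfrom D E F).comp ((f.tens g).tens h) := Eqv.cr _ (Eqv.comp_id _)

end Aux

section Aux2
variable {V : Type}

local infix:50 " ≋ " => Eqv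

/-- leaves of a formula -/
abbrev Leaf (V : Type) := (V × V) ⊕ Unit

def leafFm : Leaf V → Fm V
  | Sum.inl (a, b) => Fm.rel a b
  | Sum.inr _ => Fm.top

def leaves : Fm V → List (Leaf V)
  | .rel a b => [Sum.inl (a, b)]
  | .top => [Sum.inr ()]
  | .and A B => leaves A ++ leaves B

theorem leaves_len_pos (A : Fm V) : 0 < (leaves A).length := by
  induction A with
  | rel a b => simp [leaves]
  | top => simp [leaves]
  | and A B ihA ihB => simp [leaves]; omega

theorem leaves_ne_nil (A : Fm V) : leaves A ≠ [] := by
  intro h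
  have := leaves_len_pos A
  rw [h] at this
  simp at this

def cntL [DecidableEq V] (x : V) : Leaf V → ℕ
  | Sum.inl (a, b) => (if a = x then 1 else 0) + (if b = x then 1 else 0)
  | Sum.inr _ => 0

def cnt [DecidableEq V] (x : V) (l : List (Leaf V)) : ℕ := (l.map (cntL x)).sum

def ctopL : Leaf V → ℕ
  | Sum.inl _ => 0
  | Sum.inr _ => 1

def ctop (l : List (Leaf V)) : ℕ := (l.map ctopL).sum

theorem cnt_append [DecidableEq V] (x : V) (l1 l2 : List (Leaf V)) :
    cnt x (l1 ++ l2) = cnt x l1 + cnt x l2 := by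
  simp [cnt]

theorem ctop_append (l1 l2 : List (Leaf V)) :
    ctop (l1 ++ l2) = ctop l1 + ctop l2 := by
  simp [ctop]

theorem countF_eq_cnt [DecidableEq V] (x : V) (A : Fm V) :
    countF x A = cnt x (leaves A) := by
  induction A with
  | rel a b => simp [countF, leaves, cnt, cntL]
  | top => simp [countF, leaves, cnt, cntL]
  | and A B ihA ihB =>
      show countF x A + countF x B = cnt x (leaves A ++ leaves B)
      rw [cnt_append, ihA, ihB]

def ntop : Fm V → ℕ
  | .rel _ _ => 0
  | .top => 1
  | .and A B => ntop A + ntop B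

theorem ntop_eq_ctop (A : Fm V) : ntop A = ctop (leaves A) := by
  induction A with
  | rel a b => simp [ntop, leaves, ctop, ctopL]
  | top => simp [ntop, leaves, ctop, ctopL]
  | and A B ihA ihB => simp [ntop, leaves, ctop_append, ihA, ihB]

/-- the class of arrow terms we consider -/
def Cl {A B : Fm V} (f : Ar V A B) : Prop := rLess f ∧ dsLess f

theorem Cl.comp {A B C : Fm V} {g : Ar V B C} {f : Ar V A B}
    (hg : Cl g) (hf : Cl f) : Cl (g.comp f) :=
  ⟨⟨hg.1, hf.1⟩, ⟨hg.2, hf.2⟩⟩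

theorem Cl.tens {A B C D : Fm V} {f : Ar V A B} {g : Ar V C D}
    (hf : Cl f) (hg : Cl g) : Cl (f.tens g) :=
  ⟨⟨hf.1, hg.1⟩, ⟨hf.2, hg.2⟩⟩

theorem Cl.comp_left {A B C : Fm V} {g : Ar V B C} {f : Ar V A B}
    (h : Cl (g.comp f)) : Cl g := ⟨h.1.1, h.2.1⟩

theorem Cl.comp_right {A B C : Fm V} {g : Ar V B C} {f : Ar V A B}
    (h : Cl (g.comp f)) : Cl f := ⟨h.1.2, h.2.2⟩

theorem Cl.id (A : Fm V) : Cl (Ar.id A) := ⟨trivial, trivial⟩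
theorem Cl.bto (A B C : Fm V) : Cl (Ar.bto (V := V) A B C) := ⟨trivial, trivial⟩
theorem Cl.bfrom (A B C : Fm V) : Cl (Ar.bfrom (V := V) A B C) := ⟨trivial, trivial⟩
theorem Cl.t (x y z : V) : Cl (Ar.t (V := V) x y z) := ⟨trivial, trivial⟩
theorem Cl.s (x y : V) : Cl (Ar.s (V := V) x y) := ⟨trivial, trivial⟩

/-- parity: a class arrow preserves variable-count parity -/
theorem par [DecidableEq V] {A B : Fm V} {f : Ar V A B} (hf : Cl f) (x : V) :
    (countF x A + countF x B) % 2 = 0 := by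
  induction f with
  | id A => omega
  | comp g f ihg ihf =>
      have h1 := ihg ⟨hf.1.1, hf.2.1⟩
      have h2 := ihf ⟨hf.1.2, hf.2.2⟩
      omega
  | tens f g ihf ihg =>
      have h1 := ihf ⟨hf.1.1, hf.2.1⟩
      have h2 := ihg ⟨hf.1.2, hf.2.2⟩
      simp [countF] at *
      omega
  | bto A B C => simp [countF]; omega
  | bfrom A B C => simp [countF]; omega
  | dto A => exact hf.2.elim
  | dfrom A => exact hf.2.elim
  | sto A => exact hf.2.elim
  | sfrom A => exact hf.2.elim
  | r a => exact hf.1.elim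
  | t a b c => simp [countF]; split_ifs <;> omega
  | s a b => simp [countF]; split_ifs <;> omega

/-- class arrows create no new variables -/
theorem vz [DecidableEq V] {A B : Fm V} {f : Ar V A B} (hf : Cl f) (x : V)
    (h : countF x A = 0) : countF x B = 0 := by
  induction f with
  | id A => exact h
  | comp g f ihg ihf => exact ihg ⟨hf.1.1, hf.2.1⟩ (ihf ⟨hf.1.2, hf.2.2⟩ h)
  | tens f g ihf ihg =>
      simp [countF] at h ⊢
      exact ⟨ihf ⟨hf.1.1, hf.2.1⟩ h.1, ihg ⟨hf.1.2, hf.2.2⟩ h.2⟩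
  | bto A B C => simp [countF] at h ⊢; omega
  | bfrom A B C => simp [countF] at h ⊢; omega
  | dto A => exact hf.2.elim
  | dfrom A => exact hf.2.elim
  | sto A => exact hf.2.elim
  | sfrom A => exact hf.2.elim
  | r a => exact hf.1.elim
  | t a b c => simp [countF] at h ⊢; tauto
  | s a b => simp [countF] at h ⊢; tauto

/-- class arrows preserve the number of ⊤-leaves -/
theorem ntop_pres {A B : Fm V} {f : Ar V A B} (hf : Cl f) : ntop A = ntop B := by
  induction f with
  | id A => rfl
  | comp g f ihg ihf => exact (ihf ⟨hf.1.2, hf.2.2⟩).trans (ihg ⟨hf.1.1, hf.2.1⟩)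
  | tens f g ihf ihg =>
      simp [ntop, ihf ⟨hf.1.1, hf.2.1⟩, ihg ⟨hf.1.2, hf.2.2⟩]
  | bto A B C => simp [ntop]; omega
  | bfrom A B C => simp [ntop]; omega
  | dto A => exact hf.2.elim
  | dfrom A => exact hf.2.elim
  | sto A => exact hf.2.elim
  | sfrom A => exact hf.2.elim
  | r a => exact hf.1.elim
  | t a b c => simp [ntop]
  | s a b => simp [ntop]

end Aux2

section Aux3
variable {V : Type}

local infix:50 " ≋ " => Eqv

/-- right comb formula of a list of leaves -/
def rc : List (Leaf V) → Fm V
  | [] => Fm.top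
  | [x] => leafFm x
  | x :: y :: ys => (leafFm x).and (rc (y :: ys))

/-- cast along an equality of leaf-lists (target side) -/
def lcast {A : Fm V} {l l' : List (Leaf V)} (e : l = l') (f : Ar V A (rc l)) :
    Ar V A (rc l') := congrArg rc e ▸ f

@[simp] theorem lcast_rfl {A : Fm V} {l : List (Leaf V)} (f : Ar V A (rc l)) :
    lcast rfl f = f := rfl

theorem lcast_comp {A B : Fm V} {l l' : List (Leaf V)} (e : l = l')
    (g : Ar V B (rc l)) (f : Ar V A B) :
    lcast e (g.comp f) = (lcast e g).comp f := by subst e; rfl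

theorem eqv_lcast {A : Fm V} {l l' : List (Leaf V)} (e : l = l')
    {f g : Ar V A (rc l)} (h : f ≋ g) : lcast e f ≋ lcast e g := by subst e; exact h

theorem lcast_lcast {A : Fm V} {l l' l'' : List (Leaf V)} (e : l = l') (e' : l' = l'')
    (f : Ar V A (rc l)) : lcast e' (lcast e f) = lcast (e.trans e') f := by
  subst e; subst e'; rfl

theorem lcast_symm_cancel {A : Fm V} {l l' : List (Leaf V)} (e : l = l')
    (f : Ar V A (rc l)) : lcast e.symm (lcast e f) = f := by subst e; rfl

theorem lcast_tensl {P A : Fm V} {l l' : List (Leaf V)} (e : l = l')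
    (f : Ar V A (rc l)) :
    HEq ((Ar.id P).tens (lcast e f)) ((Ar.id P).tens f) := by subst e; rfl

/-- heterogeneous Eqv, target adjusted along a leaf-list equality -/
def EqvL {A : Fm V} {l l' : List (Leaf V)} (f : Ar V A (rc l)) (g : Ar V A (rc l')) :
    Prop := ∃ e : l = l', lcast e f ≋ g

theorem EqvL.ofEqv {A : Fm V} {l : List (Leaf V)} {f g : Ar V A (rc l)}
    (h : f ≋ g) : EqvL f g := ⟨rfl, h⟩

theorem EqvL.toEqv {A : Fm V} {l : List (Leaf V)} {f g : Ar V A (rc l)}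
    (h : EqvL f g) : f ≋ g := by
  obtain ⟨e, he⟩ := h
  have : e = rfl := Subsingleton.elim _ _
  rw [this] at he; exact he

theorem EqvL.transR {A : Fm V} {l l' : List (Leaf V)} {f : Ar V A (rc l)}
    {g g' : Ar V A (rc l')} (h : EqvL f g) (h' : g ≋ g') : EqvL f g' := by
  obtain ⟨e, he⟩ := h; exact ⟨e, he.trans h'⟩

theorem EqvL.transL {A : Fm V} {l l' : List (Leaf V)} {f f' : Ar V A (rc l)}
    {g : Ar V A (rc l')} (h : f' ≋ f) (h' : EqvL f g) : EqvL f' g := by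
  obtain ⟨e, he⟩ := h'; exact ⟨e, (eqv_lcast e h).trans he⟩

theorem EqvL.compr {A B : Fm V} {l l' : List (Leaf V)} {f : Ar V B (rc l)}
    {g : Ar V B (rc l')} (h : EqvL f g) (k : Ar V A B) :
    EqvL (f.comp k) (g.comp k) := by
  obtain ⟨e, he⟩ := h
  exact ⟨e, by rw [lcast_comp]; exact Eqv.cl k he⟩

/-- gluing map for right combs -/
def gl : ∀ (l1 l2 : List (Leaf V)), Ar V ((rc l1).and (rc l2)) (rc (l1 ++ l2))
  | [], l2 => Ar.sto (rc l2)
  | [x], [] => Ar.dto (leafFm x)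
  | [x], _ :: _ => Ar.id _
  | x :: y :: ys, l2 =>
      ((Ar.id (leafFm x)).tens (gl (y :: ys) l2)).comp
        (Ar.bfrom (leafFm x) (rc (y :: ys)) (rc l2))

def toComb : ∀ (A : Fm V), Ar V A (rc (leaves A))
  | .rel _ _ => Ar.id _
  | .top => Ar.id _
  | .and A B => (gl (leaves A) (leaves B)).comp ((toComb A).tens (toComb B))

/-- pure-associativity arrows -/
inductive PureB : ∀ {A B : Fm V}, Ar V A B → Prop
  | id (A : Fm V) : PureB (Ar.id A)
  | comp {A B C : Fm V} {g : Ar V B C} {f : Ar V A B} :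
      PureB g → PureB f → PureB (g.comp f)
  | tens {A B C D : Fm V} {f : Ar V A B} {g : Ar V C D} :
      PureB f → PureB g → PureB (f.tens g)
  | bto (A B C : Fm V) : PureB (Ar.bto A B C)
  | bfrom (A B C : Fm V) : PureB (Ar.bfrom A B C)

theorem PureB.cl {A B : Fm V} {f : Ar V A B} (h : PureB f) : Cl f := by
  induction h with
  | id A => exact Cl.id A
  | comp _ _ ih1 ih2 => exact ih1.comp ih2
  | tens _ _ ih1 ih2 => exact ih1.tens ih2
  | bto A B C => exact Cl.bto A B C
  | bfrom A B C => exact Cl.bfrom A B C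

theorem PureB.leaves_eq {A B : Fm V} {f : Ar V A B} (h : PureB f) :
    leaves A = leaves B := by
  induction h with
  | id A => rfl
  | comp _ _ ih1 ih2 => exact ih2.trans ih1
  | tens _ _ ih1 ih2 => simp [leaves, ih1, ih2]
  | bto A B C => simp [leaves, List.append_assoc]
  | bfrom A B C => simp [leaves, List.append_assoc]

theorem PureB.inv {A B : Fm V} {f : Ar V A B} (h : PureB f) :
    ∃ j : Ar V B A, PureB j ∧ (j.comp f ≋ Ar.id A) ∧ (f.comp j ≋ Ar.id B) := by
  induction h with
  | id A => exact ⟨Ar.id A, PureB.id A, Eqv.id_comp _, Eqv.id_comp _⟩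
  | @comp A B C g f _ _ ihg ihf =>
      obtain ⟨jg, hjg, hg1, hg2⟩ := ihg
      obtain ⟨jf, hjf, hf1, hf2⟩ := ihf
      refine ⟨jf.comp jg, hjf.comp hjg, ?_, ?_⟩
      · calc (jf.comp jg).comp (g.comp f) ≋ jf.comp (jg.comp (g.comp f)) :=
              Eqv.comp_assoc _ _ _
          _ ≋ jf.comp ((jg.comp g).comp f) := Eqv.cr _ (Eqv.comp_assoc _ _ _).symm
          _ ≋ jf.comp ((Ar.id B).comp f) := Eqv.cr _ (Eqv.cl _ hg1)
          _ ≋ jf.comp f := Eqv.cr _ (Eqv.id_comp _)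
          _ ≋ Ar.id A := hf1
      · calc (g.comp f).comp (jf.comp jg) ≋ g.comp (f.comp (jf.comp jg)) :=
              Eqv.comp_assoc _ _ _
          _ ≋ g.comp ((f.comp jf).comp jg) := Eqv.cr _ (Eqv.comp_assoc _ _ _).symm
          _ ≋ g.comp ((Ar.id B).comp jg) := Eqv.cr _ (Eqv.cl _ hf2)
          _ ≋ g.comp jg := Eqv.cr _ (Eqv.id_comp _)
          _ ≋ Ar.id C := hg2
  | @tens A B C D f g _ _ ihf ihg =>
      obtain ⟨jf, hjf, hf1, hf2⟩ := ihf
      obtain ⟨jg, hjg, hg1, hg2⟩ := ihg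
      refine ⟨jf.tens jg, hjf.tens hjg, ?_, ?_⟩
      · calc (jf.tens jg).comp (f.tens g) ≋ (jf.comp f).tens (jg.comp g) :=
              Eqv.inter _ _ _ _
          _ ≋ (Ar.id A).tens (Ar.id C) := hf1.congr_tens hg1
          _ ≋ Ar.id (A.and C) := Eqv.tens_id A C
      · calc (f.tens g).comp (jf.tens jg) ≋ (f.comp jf).tens (g.comp jg) :=
              Eqv.inter _ _ _ _
          _ ≋ (Ar.id B).tens (Ar.id D) := hf2.congr_tens hg2
          _ ≋ Ar.id (B.and D) := Eqv.tens_id B D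
  | bto A B C => exact ⟨Ar.bfrom A B C, PureB.bfrom A B C, Eqv.bb1 A B C, Eqv.bb2 A B C⟩
  | bfrom A B C => exact ⟨Ar.bto A B C, PureB.bto A B C, Eqv.bb2 A B C, Eqv.bb1 A B C⟩

theorem gl_pureB : ∀ (l1 l2 : List (Leaf V)), l1 ≠ [] → l2 ≠ [] → PureB (gl l1 l2)
  | [], _, h1, _ => absurd rfl h1
  | [x], [], _, h2 => absurd rfl h2
  | [x], _ :: _, _, _ => PureB.id _
  | x :: y :: ys, l2, _, h2 =>
      PureB.comp ((PureB.id _).tens (gl_pureB (y :: ys) l2 (by simp) h2))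
        (PureB.bfrom _ _ _)

theorem toComb_pureB (A : Fm V) : PureB (toComb A) := by
  induction A with
  | rel a b => exact PureB.id _
  | top => exact PureB.id _
  | and A B ihA ihB =>
      exact PureB.comp (gl_pureB _ _ (leaves_ne_nil A) (leaves_ne_nil B)) (ihA.tens ihB)

end Aux3

section Aux4
variable {V : Type}

local infix:50 " ≋ " => Eqv

theorem lcast_self {A : Fm V} {l : List (Leaf V)} (e : l = l) (f : Ar V A (rc l)) :
    lcast e f = f := by
  have : e = rfl := Subsingleton.elim _ _
  rw [this]; rfl

theorem tensr_split {A B C : Fm V} (u : Ar V B C) (v : Ar V A B) (S : Fm V) :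
    (u.comp v).tens (Ar.id S) ≋ (u.tens (Ar.id S)).comp (v.tens (Ar.id S)) :=
  ((Eqv.refl _).congr_tens (Eqv.id_comp (Ar.id S)).symm).trans
    (Eqv.tens_comp u v (Ar.id S) (Ar.id S))

theorem tensl_split {A B C : Fm V} (S : Fm V) (u : Ar V B C) (v : Ar V A B) :
    (Ar.id S).tens (u.comp v) ≋ ((Ar.id S).tens u).comp ((Ar.id S).tens v) :=
  (((Eqv.id_comp (Ar.id S)).symm).congr_tens (Eqv.refl _)).trans
    (Eqv.tens_comp (Ar.id S) (Ar.id S) u v)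

/-- pentagon, inverse form -/
theorem pent_inv (P Q R S : Fm V) :
    (Ar.bfrom P (Q.and R) S).comp
      (((Ar.bfrom P Q R).tens (Ar.id S)).comp (Ar.bto (P.and Q) R S)) ≋
    ((Ar.id P).tens (Ar.bto Q R S)).comp (Ar.bfrom P Q (R.and S)) := by
  apply Eqv.cancel_right (i := Ar.bto P Q (R.and S)) (j := Ar.bfrom P Q (R.and S))
    (Eqv.bb2 P Q (R.and S))
  calc ((Ar.bfrom P (Q.and R) S).comp
        (((Ar.bfrom P Q R).tens (Ar.id S)).comp (Ar.bto (P.and Q) R S))).comp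
        (Ar.bto P Q (R.and S))
      ≋ (Ar.bfrom P (Q.and R) S).comp
        (((Ar.bfrom P Q R).tens (Ar.id S)).comp
          ((Ar.bto (P.and Q) R S).comp (Ar.bto P Q (R.and S)))) := by
        refine (Eqv.comp_assoc _ _ _).trans (Eqv.cr _ ?_)
        exact Eqv.comp_assoc _ _ _
    _ ≋ (Ar.bfrom P (Q.and R) S).comp
        (((Ar.bfrom P Q R).tens (Ar.id S)).comp
          (((Ar.bto P Q R).tens (Ar.id S)).comp
            ((Ar.bto P (Q.and R) S).comp ((Ar.id P).tens (Ar.bto Q R S))))) :=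
        Eqv.cr _ (Eqv.cr _ (Eqv.pent P Q R S))
    _ ≋ (Ar.bfrom P (Q.and R) S).comp
        ((((Ar.bfrom P Q R).comp (Ar.bto P Q R)).tens ((Ar.id S).comp (Ar.id S))).comp
          ((Ar.bto P (Q.and R) S).comp ((Ar.id P).tens (Ar.bto Q R S)))) := by
        refine Eqv.cr _ ?_
        refine (Eqv.comp_assoc _ _ _).symm.trans (Eqv.cl _ ?_)
        exact Eqv.inter _ _ _ _
    _ ≋ (Ar.bfrom P (Q.and R) S).comp
        (((Ar.id (P.and (Q.and R))).tens (Ar.id S)).comp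
          ((Ar.bto P (Q.and R) S).comp ((Ar.id P).tens (Ar.bto Q R S)))) :=
        Eqv.cr _ (Eqv.cl _ ((Eqv.bb1 P Q R).congr_tens (Eqv.id_comp _)))
    _ ≋ (Ar.bfrom P (Q.and R) S).comp
        ((Ar.id ((P.and (Q.and R)).and S)).comp
          ((Ar.bto P (Q.and R) S).comp ((Ar.id P).tens (Ar.bto Q R S)))) :=
        Eqv.cr _ (Eqv.cl _ (Eqv.tens_id _ _))
    _ ≋ (Ar.bfrom P (Q.and R) S).comp
        ((Ar.bto P (Q.and R) S).comp ((Ar.id P).tens (Ar.bto Q R S))) :=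
        Eqv.cr _ (Eqv.id_comp _)
    _ ≋ ((Ar.bfrom P (Q.and R) S).comp (Ar.bto P (Q.and R) S)).comp
        ((Ar.id P).tens (Ar.bto Q R S)) := (Eqv.comp_assoc _ _ _).symm
    _ ≋ (Ar.id _).comp ((Ar.id P).tens (Ar.bto Q R S)) := Eqv.cl _ (Eqv.bb1 _ _ _)
    _ ≋ (Ar.id P).tens (Ar.bto Q R S) := Eqv.id_comp _
    _ ≋ ((Ar.id P).tens (Ar.bto Q R S)).comp (Ar.id _) := (Eqv.comp_id _).symm
    _ ≋ ((Ar.id P).tens (Ar.bto Q R S)).comp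
        ((Ar.bfrom P Q (R.and S)).comp (Ar.bto P Q (R.and S))) :=
        Eqv.cr _ (Eqv.bb1 _ _ _).symm
    _ ≋ (((Ar.id P).tens (Ar.bto Q R S)).comp (Ar.bfrom P Q (R.and S))).comp
        (Ar.bto P Q (R.and S)) := (Eqv.comp_assoc _ _ _).symm

theorem EqvL.tensl_cons {A : Fm V} {x z z' : Leaf V} {zs zs' : List (Leaf V)}
    {f : Ar V A (rc (z :: zs))} {g : Ar V A (rc (z' :: zs'))} (h : EqvL f g) :
    EqvL (l := x :: z :: zs) (l' := x :: z' :: zs')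
      ((Ar.id (leafFm x)).tens f) ((Ar.id (leafFm x)).tens g) := by
  obtain ⟨e, he⟩ := h
  have hz : z = z' := by injection e
  have hzs : zs = zs' := by injection e
  subst hz; subst hzs
  rw [lcast_self] at he
  exact ⟨rfl, Eqv.tr _ he⟩

theorem key : ∀ (l1 l2 l3 : List (Leaf V)), l1 ≠ [] → l2 ≠ [] → l3 ≠ [] →
    EqvL ((gl (l1 ++ l2) l3).comp
        (((gl l1 l2).tens (Ar.id (rc l3))).comp (Ar.bto (rc l1) (rc l2) (rc l3))))
      ((gl l1 (l2 ++ l3)).comp ((Ar.id (rc l1)).tens (gl l2 l3)))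
  | [], _, _, h1, _, _ => absurd rfl h1
  | _, [], _, _, h2, _ => absurd rfl h2
  | [x], z :: zs, l3, _, _, h3 => by
      apply EqvL.ofEqv
      calc (gl ([x] ++ z :: zs) l3).comp
            (((gl [x] (z :: zs)).tens (Ar.id (rc l3))).comp
              (Ar.bto (rc [x]) (rc (z :: zs)) (rc l3)))
          ≋ (gl ([x] ++ z :: zs) l3).comp
            ((Ar.id _).comp (Ar.bto (rc [x]) (rc (z :: zs)) (rc l3))) :=
            Eqv.cr _ (Eqv.cl _ (Eqv.tens_id _ _))
        _ ≋ (gl ([x] ++ z :: zs) l3).comp (Ar.bto (rc [x]) (rc (z :: zs)) (rc l3)) :=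
            Eqv.cr _ (Eqv.id_comp _)
        _ ≋ @id (Ar V _ (rc ([x] ++ z :: zs ++ l3))) (((Ar.id (leafFm x)).tens (gl (z :: zs) l3)).comp
            ((Ar.bfrom (leafFm x) (rc (z :: zs)) (rc l3)).comp
              (Ar.bto (leafFm x) (rc (z :: zs)) (rc l3)))) := Eqv.comp_assoc _ _ _
        _ ≋ @id (Ar V _ (rc ([x] ++ z :: zs ++ l3))) (((Ar.id (leafFm x)).tens (gl (z :: zs) l3)).comp (Ar.id _)) :=
            Eqv.cr _ (Eqv.bb1 _ _ _)
        _ ≋ @id (Ar V _ (rc ([x] ++ z :: zs ++ l3))) ((Ar.id (leafFm x)).tens (gl (z :: zs) l3)) := Eqv.comp_id _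
        _ ≋ @id (Ar V _ (rc ([x] ++ z :: zs ++ l3))) ((Ar.id _).comp ((Ar.id (leafFm x)).tens (gl (z :: zs) l3))) :=
            (Eqv.id_comp _).symm
  | x :: y :: ys, l2, l3, _, h2, h3 => by
      have hne : (y :: ys : List (Leaf V)) ≠ [] := by simp
      have ih := key (y :: ys) l2 l3 hne h2 h3
      set P := leafFm x with hP
      have h1 : (gl ((x :: y :: ys) ++ l2) l3).comp
            (((gl (x :: y :: ys) l2).tens (Ar.id (rc l3))).comp
              (Ar.bto (rc (x :: y :: ys)) (rc l2) (rc l3))) ≋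
          ((Ar.id P).tens ((gl ((y :: ys) ++ l2) l3).comp
              (((gl (y :: ys) l2).tens (Ar.id (rc l3))).comp
                (Ar.bto (rc (y :: ys)) (rc l2) (rc l3))))).comp
            (Ar.bfrom P (rc (y :: ys)) ((rc l2).and (rc l3))) := by
        calc (((Ar.id P).tens (gl ((y :: ys) ++ l2) l3)).comp
              (Ar.bfrom P (rc ((y :: ys) ++ l2)) (rc l3))).comp
              (((((Ar.id P).tens (gl (y :: ys) l2)).comp
                  (Ar.bfrom P (rc (y :: ys)) (rc l2))).tens (Ar.id (rc l3))).comp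
                (Ar.bto (P.and (rc (y :: ys))) (rc l2) (rc l3)))
            ≋ ((Ar.id P).tens (gl ((y :: ys) ++ l2) l3)).comp
              ((Ar.bfrom P (rc ((y :: ys) ++ l2)) (rc l3)).comp
              (((((Ar.id P).tens (gl (y :: ys) l2)).comp
                  (Ar.bfrom P (rc (y :: ys)) (rc l2))).tens (Ar.id (rc l3))).comp
                (Ar.bto (P.and (rc (y :: ys))) (rc l2) (rc l3)))) := Eqv.comp_assoc _ _ _
          _ ≋ ((Ar.id P).tens (gl ((y :: ys) ++ l2) l3)).comp
              ((Ar.bfrom P (rc ((y :: ys) ++ l2)) (rc l3)).comp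
              (((((Ar.id P).tens (gl (y :: ys) l2)).tens (Ar.id (rc l3))).comp
                  ((Ar.bfrom P (rc (y :: ys)) (rc l2)).tens (Ar.id (rc l3)))).comp
                (Ar.bto (P.and (rc (y :: ys))) (rc l2) (rc l3)))) :=
              Eqv.cr _ (Eqv.cr _ (Eqv.cl _ (tensr_split _ _ _)))
          _ ≋ ((Ar.id P).tens (gl ((y :: ys) ++ l2) l3)).comp
              (((Ar.bfrom P (rc ((y :: ys) ++ l2)) (rc l3)).comp
                  (((Ar.id P).tens (gl (y :: ys) l2)).tens (Ar.id (rc l3)))).comp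
                (((Ar.bfrom P (rc (y :: ys)) (rc l2)).tens (Ar.id (rc l3))).comp
                  (Ar.bto (P.and (rc (y :: ys))) (rc l2) (rc l3)))) := by
              refine Eqv.cr _ ?_
              refine ((Eqv.comp_assoc _ _ _).symm.trans ?_)
              refine (Eqv.cl _ (Eqv.comp_assoc _ _ _).symm).trans ?_
              exact Eqv.comp_assoc _ _ _
          _ ≋ ((Ar.id P).tens (gl ((y :: ys) ++ l2) l3)).comp
              ((((Ar.id P).tens ((gl (y :: ys) l2).tens (Ar.id (rc l3)))).comp
                  (Ar.bfrom P ((rc (y :: ys)).and (rc l2)) (rc l3))).comp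
                (((Ar.bfrom P (rc (y :: ys)) (rc l2)).tens (Ar.id (rc l3))).comp
                  (Ar.bto (P.and (rc (y :: ys))) (rc l2) (rc l3)))) :=
              Eqv.cr _ (Eqv.cl _ (nat_bfrom (Ar.id P) (gl (y :: ys) l2)
                (Ar.id (rc l3))).symm)
          _ ≋ ((Ar.id P).tens (gl ((y :: ys) ++ l2) l3)).comp
              (((Ar.id P).tens ((gl (y :: ys) l2).tens (Ar.id (rc l3)))).comp
                ((Ar.bfrom P ((rc (y :: ys)).and (rc l2)) (rc l3)).comp
                  (((Ar.bfrom P (rc (y :: ys)) (rc l2)).tens (Ar.id (rc l3))).comp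
                    (Ar.bto (P.and (rc (y :: ys))) (rc l2) (rc l3))))) :=
              Eqv.cr _ (Eqv.comp_assoc _ _ _)
          _ ≋ ((Ar.id P).tens (gl ((y :: ys) ++ l2) l3)).comp
              (((Ar.id P).tens ((gl (y :: ys) l2).tens (Ar.id (rc l3)))).comp
                (((Ar.id P).tens (Ar.bto (rc (y :: ys)) (rc l2) (rc l3))).comp
                  (Ar.bfrom P (rc (y :: ys)) ((rc l2).and (rc l3))))) :=
              Eqv.cr _ (Eqv.cr _ (pent_inv P (rc (y :: ys)) (rc l2) (rc l3)))
          _ ≋ ((Ar.id P).tens (gl ((y :: ys) ++ l2) l3)).comp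
              ((((Ar.id P).tens ((gl (y :: ys) l2).tens (Ar.id (rc l3)))).comp
                  ((Ar.id P).tens (Ar.bto (rc (y :: ys)) (rc l2) (rc l3)))).comp
                (Ar.bfrom P (rc (y :: ys)) ((rc l2).and (rc l3)))) :=
              Eqv.cr _ (Eqv.comp_assoc _ _ _).symm
          _ ≋ ((Ar.id P).tens (gl ((y :: ys) ++ l2) l3)).comp
              (((Ar.id P).tens (((gl (y :: ys) l2).tens (Ar.id (rc l3))).comp
                  (Ar.bto (rc (y :: ys)) (rc l2) (rc l3)))).comp
                (Ar.bfrom P (rc (y :: ys)) ((rc l2).and (rc l3)))) :=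
              Eqv.cr _ (Eqv.cl _ (tensl_split _ _ _).symm)
          _ ≋ (((Ar.id P).tens (gl ((y :: ys) ++ l2) l3)).comp
              ((Ar.id P).tens (((gl (y :: ys) l2).tens (Ar.id (rc l3))).comp
                  (Ar.bto (rc (y :: ys)) (rc l2) (rc l3))))).comp
                (Ar.bfrom P (rc (y :: ys)) ((rc l2).and (rc l3))) :=
              (Eqv.comp_assoc _ _ _).symm
          _ ≋ ((Ar.id P).tens ((gl ((y :: ys) ++ l2) l3).comp
              (((gl (y :: ys) l2).tens (Ar.id (rc l3))).comp
                (Ar.bto (rc (y :: ys)) (rc l2) (rc l3))))).comp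
                (Ar.bfrom P (rc (y :: ys)) ((rc l2).and (rc l3))) :=
              Eqv.cl _ (tensl_split _ _ _).symm
      have h2' : (gl (x :: y :: ys) (l2 ++ l3)).comp
            ((Ar.id (rc (x :: y :: ys))).tens (gl l2 l3)) ≋
          ((Ar.id P).tens ((gl (y :: ys) (l2 ++ l3)).comp
              ((Ar.id (rc (y :: ys))).tens (gl l2 l3)))).comp
            (Ar.bfrom P (rc (y :: ys)) ((rc l2).and (rc l3))) := by
        calc (((Ar.id P).tens (gl (y :: ys) (l2 ++ l3))).comp
              (Ar.bfrom P (rc (y :: ys)) (rc (l2 ++ l3)))).comp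
              ((Ar.id (rc (x :: y :: ys))).tens (gl l2 l3))
            ≋ ((Ar.id P).tens (gl (y :: ys) (l2 ++ l3))).comp
              ((Ar.bfrom P (rc (y :: ys)) (rc (l2 ++ l3))).comp
                ((Ar.id (rc (x :: y :: ys))).tens (gl l2 l3))) := Eqv.comp_assoc _ _ _
          _ ≋ ((Ar.id P).tens (gl (y :: ys) (l2 ++ l3))).comp
              ((Ar.bfrom P (rc (y :: ys)) (rc (l2 ++ l3))).comp
                (((Ar.id P).tens (Ar.id (rc (y :: ys)))).tens (gl l2 l3))) :=
              Eqv.cr _ (Eqv.cr _ ((Eqv.tens_id _ _).symm.congr_tens (Eqv.refl _)))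
          _ ≋ ((Ar.id P).tens (gl (y :: ys) (l2 ++ l3))).comp
              (((Ar.id P).tens ((Ar.id (rc (y :: ys))).tens (gl l2 l3))).comp
                (Ar.bfrom P (rc (y :: ys)) ((rc l2).and (rc l3)))) :=
              Eqv.cr _ (nat_bfrom _ _ _).symm
          _ ≋ (((Ar.id P).tens (gl (y :: ys) (l2 ++ l3))).comp
              ((Ar.id P).tens ((Ar.id (rc (y :: ys))).tens (gl l2 l3)))).comp
                (Ar.bfrom P (rc (y :: ys)) ((rc l2).and (rc l3))) :=
              (Eqv.comp_assoc _ _ _).symm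
          _ ≋ ((Ar.id P).tens ((gl (y :: ys) (l2 ++ l3)).comp
              ((Ar.id (rc (y :: ys))).tens (gl l2 l3)))).comp
                (Ar.bfrom P (rc (y :: ys)) ((rc l2).and (rc l3))) :=
              Eqv.cl _ (tensl_split _ _ _).symm
      have h3' := (EqvL.tensl_cons (x := x) ih).compr
        (Ar.bfrom P (rc (y :: ys)) ((rc l2).and (rc l3)))
      exact (h3'.transR h2'.symm).transL h1
end Aux4

section Aux5
variable {V : Type}

local infix:50 " ≋ " => Eqv

/-- EqvL.trans -/
theorem EqvL.trans {A : Fm V} {l l' l'' : List (Leaf V)} {f : Ar V A (rc l)}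
    {g : Ar V A (rc l')} {h : Ar V A (rc l'')} (h1 : EqvL f g) (h2 : EqvL g h) :
    EqvL f h := by
  obtain ⟨e1, he1⟩ := h1
  obtain ⟨e2, he2⟩ := h2
  exact ⟨e1.trans e2, by rw [← lcast_lcast]; exact (eqv_lcast e2 he1).trans he2⟩

theorem glue_cong {X1 X2 : Fm V} {m1 m2 : List (Leaf V)}
    {a1 : Ar V X1 (rc m1)} {a2 : Ar V X2 (rc m2)}
    {b1 : Ar V X1 (rc (leaves X1))} {b2 : Ar V X2 (rc (leaves X2))}
    (h1 : EqvL a1 b1) (h2 : EqvL a2 b2) :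
    EqvL ((gl m1 m2).comp (a1.tens a2))
      ((gl (leaves X1) (leaves X2)).comp (b1.tens b2)) := by
  obtain ⟨e1, he1⟩ := h1
  obtain ⟨e2, he2⟩ := h2
  subst e1; subst e2
  rw [lcast_self] at he1
  rw [lcast_self] at he2
  exact ⟨rfl, by rw [lcast_self]; exact Eqv.cr _ (he1.congr_tens he2)⟩

theorem pbcoh_bto (A B C : Fm V) :
    EqvL ((toComb ((A.and B).and C)).comp (Ar.bto A B C)) (toComb (A.and (B.and C))) := by
  have step1 : (toComb ((A.and B).and C)).comp (Ar.bto A B C) ≋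
      ((gl (leaves A ++ leaves B) (leaves C)).comp
        (((gl (leaves A) (leaves B)).tens (Ar.id (rc (leaves C)))).comp
          (Ar.bto (rc (leaves A)) (rc (leaves B)) (rc (leaves C))))).comp
        ((toComb A).tens ((toComb B).tens (toComb C))) := by
    calc ((gl (leaves A ++ leaves B) (leaves C)).comp
          ((((gl (leaves A) (leaves B)).comp ((toComb A).tens (toComb B))).tens
            (toComb C)))).comp (Ar.bto A B C)
        ≋ ((gl (leaves A ++ leaves B) (leaves C)).comp
          ((((gl (leaves A) (leaves B)).comp ((toComb A).tens (toComb B))).tens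
            ((Ar.id (rc (leaves C))).comp (toComb C))))).comp (Ar.bto A B C) :=
          Eqv.cl _ (Eqv.cr _ ((Eqv.refl _).congr_tens (Eqv.id_comp _).symm))
      _ ≋ ((gl (leaves A ++ leaves B) (leaves C)).comp
          ((((gl (leaves A) (leaves B)).tens (Ar.id (rc (leaves C)))).comp
            (((toComb A).tens (toComb B)).tens (toComb C))))).comp (Ar.bto A B C) :=
          Eqv.cl _ (Eqv.cr _ (Eqv.tens_comp _ _ _ _))
      _ ≋ (gl (leaves A ++ leaves B) (leaves C)).comp
          ((((gl (leaves A) (leaves B)).tens (Ar.id (rc (leaves C)))).comp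
            ((((toComb A).tens (toComb B)).tens (toComb C)).comp (Ar.bto A B C)))) := by
          refine (Eqv.comp_assoc _ _ _).trans (Eqv.cr _ ?_)
          exact Eqv.comp_assoc _ _ _
      _ ≋ (gl (leaves A ++ leaves B) (leaves C)).comp
          (((gl (leaves A) (leaves B)).tens (Ar.id (rc (leaves C)))).comp
            ((Ar.bto (rc (leaves A)) (rc (leaves B)) (rc (leaves C))).comp
              ((toComb A).tens ((toComb B).tens (toComb C))))) :=
          Eqv.cr _ (Eqv.cr _ (Eqv.nat_b _ _ _))
      _ ≋ ((gl (leaves A ++ leaves B) (leaves C)).comp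
          (((gl (leaves A) (leaves B)).tens (Ar.id (rc (leaves C)))).comp
            (Ar.bto (rc (leaves A)) (rc (leaves B)) (rc (leaves C))))).comp
              ((toComb A).tens ((toComb B).tens (toComb C))) := by
          refine (Eqv.cr _ (Eqv.comp_assoc _ _ _).symm).trans ?_
          exact (Eqv.comp_assoc _ _ _).symm
  have step2 := (key (leaves A) (leaves B) (leaves C) (leaves_ne_nil A)
      (leaves_ne_nil B) (leaves_ne_nil C)).compr
      ((toComb A).tens ((toComb B).tens (toComb C)))
  have step3 : ((gl (leaves A) (leaves B ++ leaves C)).comp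
        ((Ar.id (rc (leaves A))).tens (gl (leaves B) (leaves C)))).comp
        ((toComb A).tens ((toComb B).tens (toComb C))) ≋ toComb (A.and (B.and C)) := by
    calc ((gl (leaves A) (leaves B ++ leaves C)).comp
          ((Ar.id (rc (leaves A))).tens (gl (leaves B) (leaves C)))).comp
          ((toComb A).tens ((toComb B).tens (toComb C)))
        ≋ (gl (leaves A) (leaves B ++ leaves C)).comp
          (((Ar.id (rc (leaves A))).tens (gl (leaves B) (leaves C))).comp
            ((toComb A).tens ((toComb B).tens (toComb C)))) := Eqv.comp_assoc _ _ _
      _ ≋ (gl (leaves A) (leaves B ++ leaves C)).comp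
          (((Ar.id (rc (leaves A))).comp (toComb A)).tens
            ((gl (leaves B) (leaves C)).comp ((toComb B).tens (toComb C)))) :=
          Eqv.cr _ (Eqv.inter _ _ _ _)
      _ ≋ (gl (leaves A) (leaves B ++ leaves C)).comp
          ((toComb A).tens ((gl (leaves B) (leaves C)).comp
            ((toComb B).tens (toComb C)))) :=
          Eqv.cr _ ((Eqv.id_comp _).congr_tens (Eqv.refl _))
  exact (step2.transR step3).transL step1

theorem pbcoh {X Y : Fm V} {σ : Ar V X Y} (h : PureB σ) :
    EqvL ((toComb Y).comp σ) (toComb X) := by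
  induction h with
  | id A => exact EqvL.ofEqv (Eqv.comp_id _)
  | @comp A B C g f _ _ ihg ihf =>
      refine EqvL.transL (Eqv.comp_assoc _ _ _).symm ?_
      exact (ihg.compr f).trans ihf
  | @tens A B C D f g _ _ ihf ihg =>
      refine EqvL.transL ?_ (glue_cong ihf ihg)
      calc ((gl (leaves B) (leaves D)).comp ((toComb B).tens (toComb D))).comp (f.tens g)
          ≋ (gl (leaves B) (leaves D)).comp
            (((toComb B).tens (toComb D)).comp (f.tens g)) := Eqv.comp_assoc _ _ _
        _ ≋ (gl (leaves B) (leaves D)).comp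
            (((toComb B).comp f).tens ((toComb D).comp g)) := Eqv.cr _ (Eqv.inter _ _ _ _)
  | bto A B C => exact pbcoh_bto A B C
  | @bfrom A B C =>
      obtain ⟨e, he⟩ := pbcoh_bto A B C
      rw [lcast_comp] at he
      refine ⟨e.symm, ?_⟩
      have h1 : (toComb (A.and (B.and C))).comp (Ar.bfrom A B C) ≋
          lcast e (toComb ((A.and B).and C)) := by
        calc (toComb (A.and (B.and C))).comp (Ar.bfrom A B C)
            ≋ ((lcast e (toComb ((A.and B).and C))).comp (Ar.bto A B C)).comp
                (Ar.bfrom A B C) := Eqv.cl _ he.symm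
          _ ≋ (lcast e (toComb ((A.and B).and C))).comp
                ((Ar.bto A B C).comp (Ar.bfrom A B C)) := Eqv.comp_assoc _ _ _
          _ ≋ (lcast e (toComb ((A.and B).and C))).comp (Ar.id _) :=
                Eqv.cr _ (Eqv.bb2 _ _ _)
          _ ≋ lcast e (toComb ((A.and B).and C)) := Eqv.comp_id _
      calc lcast e.symm ((toComb (A.and (B.and C))).comp (Ar.bfrom A B C))
          ≋ lcast e.symm (lcast e (toComb ((A.and B).and C))) := eqv_lcast _ h1
        _ ≋ toComb ((A.and B).and C) := by rw [lcast_symm_cancel]; exact Eqv.refl _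

theorem lcast_cancel_aux {l l' : List (Leaf V)} (e : l = l') {Y : Fm V}
    (f : Ar V Y (rc l)) (j : Ar V (rc l) Y) (hji : j.comp f ≋ Ar.id Y) :
    ∃ j' : Ar V (rc l') Y, j'.comp (lcast e f) ≋ Ar.id Y := by
  subst e; exact ⟨j, hji⟩

/-- coherence for pure-associativity arrows -/
theorem pureb_coh {X Y : Fm V} {σ σ' : Ar V X Y} (h : PureB σ) (h' : PureB σ') :
    σ ≋ σ' := by
  obtain ⟨e, he⟩ := pbcoh h
  obtain ⟨e', he'⟩ := pbcoh h'
  have : e' = e := Subsingleton.elim _ _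
  rw [this] at he'
  rw [lcast_comp] at he he'
  obtain ⟨j, _, hji, _⟩ := (toComb_pureB Y).inv
  obtain ⟨j', hj'⟩ := lcast_cancel_aux e (toComb Y) j hji
  exact Eqv.cancel_left hj' (he.trans he'.symm)

end Aux5

section Aux6
variable {V : Type}

local infix:50 " ≋ " => Eqv

/-- realizations of an atomic target -/
inductive Rz : ∀ {X : Fm V} (u v : V), Ar V X (Fm.rel u v) → Prop
  | base_id (u v : V) : Rz u v (Ar.id (Fm.rel u v))
  | base_s (u v : V) : Rz u v (Ar.s v u)
  | node {X1 X2 : Fm V} {u w v : V} {f : Ar V X1 (.rel u w)} {g : Ar V X2 (.rel w v)} :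
      Rz u w f → Rz w v g → Rz u v ((Ar.t u w v).comp (f.tens g))
  | flip {X1 X2 : Fm V} {u w v : V} {f : Ar V X1 (.rel v w)} {g : Ar V X2 (.rel w u)} :
      Rz v w f → Rz w u g → Rz u v ((Ar.s v u).comp ((Ar.t v w u).comp (f.tens g)))

/-- normal forms -/
inductive Nf : ∀ {X B : Fm V}, Ar V X B → Prop
  | top : Nf (Ar.id Fm.top)
  | atom {X : Fm V} {u v : V} {f : Ar V X (.rel u v)} : Rz u v f → Nf f
  | and {X1 X2 B1 B2 : Fm V} {f : Ar V X1 B1} {g : Ar V X2 B2} :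
      Nf f → Nf g → Nf (f.tens g)

theorem Rz.cl {X : Fm V} {u v : V} {f : Ar V X (.rel u v)} (h : Rz u v f) : Cl f := by
  induction h with
  | base_id u v => exact Cl.id _
  | base_s u v => exact Cl.s _ _
  | node _ _ ih1 ih2 => exact (Cl.t _ _ _).comp (ih1.tens ih2)
  | flip _ _ ih1 ih2 => exact (Cl.s _ _).comp ((Cl.t _ _ _).comp (ih1.tens ih2))

theorem Nf.cl {X B : Fm V} {f : Ar V X B} (h : Nf f) : Cl f := by
  induction h with
  | top => exact Cl.id _
  | atom h => exact h.cl
  | and _ _ ih1 ih2 => exact ih1.tens ih2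

theorem Rz.src_ntop {X : Fm V} {u v : V} {f : Ar V X (.rel u v)} (h : Rz u v f) :
    ntop X = 0 := by
  induction h with
  | base_id u v => rfl
  | base_s u v => rfl
  | @node X1 X2 u w v f g _ _ ih1 ih2 => show DP.ntop X1 + DP.ntop X2 = 0; rw [ih1, ih2]
  | @flip X1 X2 u w v f g _ _ ih1 ih2 => show DP.ntop X1 + DP.ntop X2 = 0; rw [ih1, ih2]

theorem flipRz {X : Fm V} {u v : V} {f : Ar V X (.rel u v)} (h : Rz u v f) :
    ∃ f' : Ar V X (.rel v u), Rz v u f' ∧ ((Ar.s u v).comp f ≋ f') := by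
  cases h with
  | base_id => exact ⟨Ar.s u v, Rz.base_s v u, Eqv.comp_id _⟩
  | base_s => exact ⟨Ar.id _, Rz.base_id v u, Eqv.sseq v u⟩
  | @node X1 X2 _ w _ f1 f2 h1 h2 =>
      exact ⟨(Ar.s u v).comp ((Ar.t u w v).comp (f1.tens f2)), Rz.flip h1 h2, Eqv.refl _⟩
  | @flip X1 X2 _ w _ f1 f2 h1 h2 =>
      refine ⟨(Ar.t v w u).comp (f1.tens f2), Rz.node h1 h2, ?_⟩
      calc (Ar.s u v).comp ((Ar.s v u).comp ((Ar.t v w u).comp (f1.tens f2)))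
          ≋ ((Ar.s u v).comp (Ar.s v u)).comp ((Ar.t v w u).comp (f1.tens f2)) :=
            (Eqv.comp_assoc _ _ _).symm
        _ ≋ (Ar.id _).comp ((Ar.t v w u).comp (f1.tens f2)) := Eqv.cl _ (Eqv.sseq v u)
        _ ≋ (Ar.t v w u).comp (f1.tens f2) := Eqv.id_comp _

theorem substRz {Y : Fm V} {u v : V} {p : Ar V Y (.rel u v)} (hp : Rz u v p) :
    ∀ {X : Fm V} (q : Ar V X Y), Nf q →
      ∃ p' : Ar V X (.rel u v), Rz u v p' ∧ (p.comp q ≋ p') := by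
  induction hp with
  | base_id u v =>
      intro X q hq
      cases hq with
      | atom hq' => exact ⟨q, hq', Eqv.id_comp q⟩
  | base_s u v =>
      intro X q hq
      cases hq with
      | atom hq' =>
          obtain ⟨q', hq'', he⟩ := flipRz hq'
          exact ⟨q', hq'', he⟩
  | @node Y1 Y2 u w v f g hf hg ihf ihg =>
      intro X q hq
      cases hq with
      | and hq1 hq2 =>
          rename_i X1 X2 q1 q2
          obtain ⟨p1, hp1, he1⟩ := ihf q1 hq1
          obtain ⟨p2, hp2, he2⟩ := ihg q2 hq2
          refine ⟨(Ar.t u w v).comp (p1.tens p2), Rz.node hp1 hp2, ?_⟩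
          calc ((Ar.t u w v).comp (f.tens g)).comp (q1.tens q2)
              ≋ (Ar.t u w v).comp ((f.tens g).comp (q1.tens q2)) := Eqv.comp_assoc _ _ _
            _ ≋ (Ar.t u w v).comp ((f.comp q1).tens (g.comp q2)) :=
                Eqv.cr _ (Eqv.inter _ _ _ _)
            _ ≋ (Ar.t u w v).comp (p1.tens p2) := Eqv.cr _ (he1.congr_tens he2)
  | @flip Y1 Y2 u w v f g hf hg ihf ihg =>
      intro X q hq
      cases hq with
      | and hq1 hq2 =>
          rename_i X1 X2 q1 q2
          obtain ⟨p1, hp1, he1⟩ := ihf q1 hq1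
          obtain ⟨p2, hp2, he2⟩ := ihg q2 hq2
          refine ⟨(Ar.s v u).comp ((Ar.t v w u).comp (p1.tens p2)), Rz.flip hp1 hp2, ?_⟩
          calc ((Ar.s v u).comp ((Ar.t v w u).comp (f.tens g))).comp (q1.tens q2)
              ≋ (Ar.s v u).comp (((Ar.t v w u).comp (f.tens g)).comp (q1.tens q2)) :=
                Eqv.comp_assoc _ _ _
            _ ≋ (Ar.s v u).comp ((Ar.t v w u).comp ((f.tens g).comp (q1.tens q2))) :=
                Eqv.cr _ (Eqv.comp_assoc _ _ _)
            _ ≋ (Ar.s v u).comp ((Ar.t v w u).comp ((f.comp q1).tens (g.comp q2))) :=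
                Eqv.cr _ (Eqv.cr _ (Eqv.inter _ _ _ _))
            _ ≋ (Ar.s v u).comp ((Ar.t v w u).comp (p1.tens p2)) :=
                Eqv.cr _ (Eqv.cr _ (he1.congr_tens he2))

theorem compNf {Y B : Fm V} {p : Ar V Y B} (hp : Nf p) :
    ∀ {X : Fm V} (q : Ar V X Y), Nf q → ∃ r : Ar V X B, Nf r ∧ (p.comp q ≋ r) := by
  induction hp with
  | top => intro X q hq; exact ⟨q, hq, Eqv.id_comp q⟩
  | atom hp' =>
      intro X q hq
      obtain ⟨p', h1, h2⟩ := substRz hp' q hq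
      exact ⟨p', Nf.atom h1, h2⟩
  | @and Y1 Y2 B1 B2 p1 p2 hp1 hp2 ih1 ih2 =>
      intro X q hq
      cases hq with
      | and hq1 hq2 =>
          rename_i X1 X2 q1 q2
          obtain ⟨r1, h1, e1⟩ := ih1 q1 hq1
          obtain ⟨r2, h2, e2⟩ := ih2 q2 hq2
          exact ⟨r1.tens r2, h1.and h2, (Eqv.inter _ _ _ _).trans (e1.congr_tens e2)⟩

theorem idNf (B : Fm V) : ∃ n : Ar V B B, Nf n ∧ (n ≋ Ar.id B) := by
  induction B with
  | rel a b => exact ⟨Ar.id _, Nf.atom (Rz.base_id a b), Eqv.refl _⟩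
  | top => exact ⟨Ar.id _, Nf.top, Eqv.refl _⟩
  | and B1 B2 ih1 ih2 =>
      obtain ⟨n1, h1, e1⟩ := ih1
      obtain ⟨n2, h2, e2⟩ := ih2
      exact ⟨n1.tens n2, h1.and h2, (e1.congr_tens e2).trans (Eqv.tens_id _ _)⟩

theorem pushNf {M M'' : Fm V} {σ : Ar V M M''} (hσ : PureB σ) :
    ∀ {X : Fm V} {n : Ar V X M}, Nf n →
      ∃ (X'' : Fm V) (n'' : Ar V X'' M'') (σ'' : Ar V X X''),
        Nf n'' ∧ PureB σ'' ∧ (σ.comp n ≋ n''.comp σ'') := by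
  induction hσ with
  | id A =>
      intro X n hn
      exact ⟨X, n, Ar.id X, hn, PureB.id X, (Eqv.id_comp n).trans (Eqv.comp_id n).symm⟩
  | @comp K M'' M? g f hg hf ihg ihf =>
      intro X n hn
      obtain ⟨X', n', σ', hn', hσ', he'⟩ := ihf hn
      obtain ⟨X'', n'', σ'', hn'', hσ'', he''⟩ := ihg hn'
      refine ⟨X'', n'', σ''.comp σ', hn'', hσ''.comp hσ', ?_⟩
      calc (g.comp f).comp n ≋ g.comp (f.comp n) := Eqv.comp_assoc _ _ _
        _ ≋ g.comp (n'.comp σ') := Eqv.cr _ he'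
        _ ≋ (g.comp n').comp σ' := (Eqv.comp_assoc _ _ _).symm
        _ ≋ (n''.comp σ'').comp σ' := Eqv.cl _ he''
        _ ≋ n''.comp (σ''.comp σ') := Eqv.comp_assoc _ _ _
  | @tens M1 M1'' M2 M2'' σ1 σ2 hσ1 hσ2 ih1 ih2 =>
      intro X n hn
      cases hn with
      | and hn1 hn2 =>
          rename_i X1 X2 n1 n2
          obtain ⟨X1', n1', σ1', h1, p1, e1⟩ := ih1 hn1
          obtain ⟨X2', n2', σ2', h2, p2, e2⟩ := ih2 hn2
          refine ⟨X1'.and X2', n1'.tens n2', σ1'.tens σ2', h1.and h2, p1.tens p2, ?_⟩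
          calc (σ1.tens σ2).comp (n1.tens n2) ≋ (σ1.comp n1).tens (σ2.comp n2) :=
                Eqv.inter _ _ _ _
            _ ≋ (n1'.comp σ1').tens (n2'.comp σ2') := e1.congr_tens e2
            _ ≋ (n1'.tens n2').comp (σ1'.tens σ2') := Eqv.tens_comp _ _ _ _
  | bto A B C =>
      intro X n hn
      cases hn with
      | and hn1 hn23 =>
          rename_i X1 X23 n1 n23
          cases hn23 with
          | and hn2 hn3 =>
              rename_i X2 X3 n2 n3
              refine ⟨(X1.and X2).and X3, (n1.tens n2).tens n3, Ar.bto X1 X2 X3,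
                (hn1.and hn2).and hn3, PureB.bto _ _ _, (Eqv.nat_b n1 n2 n3).symm⟩
  | bfrom A B C =>
      intro X n hn
      cases hn with
      | and hn12 hn3 =>
          rename_i X12 X3 n12 n3
          cases hn12 with
          | and hn1 hn2 =>
              rename_i X1 X2 n1 n2
              refine ⟨X1.and (X2.and X3), n1.tens (n2.tens n3), Ar.bfrom X1 X2 X3,
                hn1.and (hn2.and hn3), PureB.bfrom _ _ _, (nat_bfrom n1 n2 n3).symm⟩

/-- normalization -/
theorem norm {A B : Fm V} (f : Ar V A B) (hf : Cl f) :
    ∃ (A' : Fm V) (n : Ar V A' B) (ρ : Ar V A A'),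
      Nf n ∧ PureB ρ ∧ (f ≋ n.comp ρ) := by
  induction f with
  | id A =>
      obtain ⟨n, hn, he⟩ := idNf A
      exact ⟨A, n, Ar.id A, hn, PureB.id A, he.symm.trans (Eqv.comp_id n).symm⟩
  | @comp A M B g h ihg ihh =>
      obtain ⟨A', nh, ρh, hnh, hρh, heh⟩ := ihh ⟨hf.1.2, hf.2.2⟩
      obtain ⟨M', ng, ρg, hng, hρg, heg⟩ := ihg ⟨hf.1.1, hf.2.1⟩
      obtain ⟨X'', n', σ', hn', hσ', he'⟩ := pushNf hρg hnh
      obtain ⟨r, hr, her⟩ := compNf hng n' hn'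
      refine ⟨X'', r, σ'.comp ρh, hr, hσ'.comp hρh, ?_⟩
      calc g.comp h ≋ (ng.comp ρg).comp (nh.comp ρh) := heg.congr_comp heh
        _ ≋ ng.comp (ρg.comp (nh.comp ρh)) := Eqv.comp_assoc _ _ _
        _ ≋ ng.comp ((ρg.comp nh).comp ρh) := Eqv.cr _ (Eqv.comp_assoc _ _ _).symm
        _ ≋ ng.comp ((n'.comp σ').comp ρh) := Eqv.cr _ (Eqv.cl _ he')
        _ ≋ ng.comp (n'.comp (σ'.comp ρh)) := Eqv.cr _ (Eqv.comp_assoc _ _ _)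
        _ ≋ (ng.comp n').comp (σ'.comp ρh) := (Eqv.comp_assoc _ _ _).symm
        _ ≋ r.comp (σ'.comp ρh) := Eqv.cl _ her
  | @tens A1 B1 A2 B2 f1 f2 ih1 ih2 =>
      obtain ⟨A1', n1, ρ1, hn1, hρ1, he1⟩ := ih1 ⟨hf.1.1, hf.2.1⟩
      obtain ⟨A2', n2, ρ2, hn2, hρ2, he2⟩ := ih2 ⟨hf.1.2, hf.2.2⟩
      refine ⟨A1'.and A2', n1.tens n2, ρ1.tens ρ2, hn1.and hn2, hρ1.tens hρ2, ?_⟩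
      calc f1.tens f2 ≋ (n1.comp ρ1).tens (n2.comp ρ2) := he1.congr_tens he2
        _ ≋ (n1.tens n2).comp (ρ1.tens ρ2) := Eqv.tens_comp _ _ _ _
  | bto A1 B1 C1 =>
      obtain ⟨n, hn, he⟩ := idNf ((A1.and B1).and C1)
      exact ⟨(A1.and B1).and C1, n, Ar.bto A1 B1 C1, hn, PureB.bto _ _ _,
        ((Eqv.id_comp _).symm.trans (Eqv.cl _ he.symm))⟩
  | bfrom A1 B1 C1 =>
      obtain ⟨n, hn, he⟩ := idNf (A1.and (B1.and C1))
      exact ⟨A1.and (B1.and C1), n, Ar.bfrom A1 B1 C1, hn, PureB.bfrom _ _ _,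
        ((Eqv.id_comp _).symm.trans (Eqv.cl _ he.symm))⟩
  | t x y z =>
      refine ⟨(Fm.rel x y).and (Fm.rel y z),
        (Ar.t x y z).comp ((Ar.id (Fm.rel x y)).tens (Ar.id (Fm.rel y z))),
        Ar.id _, Nf.atom (Rz.node (Rz.base_id x y) (Rz.base_id y z)), PureB.id _, ?_⟩
      calc Ar.t x y z ≋ (Ar.t x y z).comp (Ar.id _) := (Eqv.comp_id _).symm
        _ ≋ (Ar.t x y z).comp ((Ar.id (Fm.rel x y)).tens (Ar.id (Fm.rel y z))) :=
            Eqv.cr _ (Eqv.tens_id _ _).symm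
        _ ≋ ((Ar.t x y z).comp ((Ar.id (Fm.rel x y)).tens (Ar.id (Fm.rel y z)))).comp
            (Ar.id _) := (Eqv.comp_id _).symm
  | s x y =>
      exact ⟨Fm.rel x y, Ar.s x y, Ar.id _, Nf.atom (Rz.base_s y x), PureB.id _,
        (Eqv.comp_id _).symm⟩
  | dto A1 => exact hf.2.elim
  | dfrom A1 => exact hf.2.elim
  | sto A1 => exact hf.2.elim
  | sfrom A1 => exact hf.2.elim
  | r x => exact hf.1.elim

end Aux6

section Aux7
variable {V : Type} [DecidableEq V]

local infix:50 " ≋ " => Eqv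

def GoodL (l : List (Leaf V)) (u v : V) : Prop :=
  ∀ x : V, cnt x l + cntL x (Sum.inl (u, v)) = 0 ∨ cnt x l + cntL x (Sum.inl (u, v)) = 2

theorem goodL_swap {l : List (Leaf V)} {u v : V} (h : GoodL l u v) : GoodL l v u := by
  intro x
  have h1 := h x
  simp only [cntL] at h1 ⊢
  omega

theorem countF_rel (x a b : V) : countF x (Fm.rel a b) = cntL x (Sum.inl (a, b)) := rfl

theorem rz_par {X : Fm V} {u v : V} {n : Ar V X (.rel u v)} (h : Rz u v n) (x : V) :
    (cnt x (leaves X) + cntL x (Sum.inl (u, v))) % 2 = 0 := by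
  have := par h.cl x
  rwa [countF_eq_cnt, countF_rel] at this

theorem rz_vz {X : Fm V} {u v : V} {n : Ar V X (.rel u v)} (h : Rz u v n) (x : V)
    (h0 : cnt x (leaves X) = 0) : cntL x (Sum.inl (u, v)) = 0 := by
  have := vz h.cl x
  rw [countF_eq_cnt, countF_rel] at this
  exact this h0

theorem good_ne {X : Fm V} {u v : V} {n : Ar V X (.rel u v)} (h : Rz u v n)
    (hg : GoodL (leaves X) u v) : u ≠ v := by
  intro e
  subst e
  have h1 := hg u
  have h2 := rz_vz h u
  simp [cntL] at h1 h2
  omega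

theorem good_cnt {X : Fm V} {u v : V} {n : Ar V X (.rel u v)} (h : Rz u v n)
    (hg : GoodL (leaves X) u v) : cnt u (leaves X) = 1 ∧ cnt v (leaves X) = 1 := by
  have hne := good_ne h hg
  have h1 := hg u
  have h2 := hg v
  have h3 := rz_vz h u
  have h4 := rz_vz h v
  simp [cntL, hne, Ne.symm hne] at h1 h2 h3 h4
  omega

/-- the basic counting facts about a node-shaped realization -/
theorem node_facts {X1 X2 : Fm V} {a w b : V} {f1 : Ar V X1 (.rel a w)}
    {f2 : Ar V X2 (.rel w b)} (hf1 : Rz a w f1) (hf2 : Rz w b f2)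
    (hg : GoodL (leaves X1 ++ leaves X2) a b) :
    a ≠ b ∧ w ≠ a ∧ w ≠ b ∧
    cnt a (leaves X1) = 1 ∧ cnt a (leaves X2) = 0 ∧
    cnt b (leaves X2) = 1 ∧ cnt b (leaves X1) = 0 ∧
    cnt w (leaves X1) = 1 ∧ cnt w (leaves X2) = 1 ∧
    (∀ y, 1 ≤ cnt y (leaves X1) → 1 ≤ cnt y (leaves X2) → y = w) ∧
    GoodL (leaves X1) a w ∧ GoodL (leaves X2) w b := by
  have hwhole : Rz a b ((Ar.t a w b).comp (f1.tens f2)) := Rz.node hf1 hf2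
  have hab : a ≠ b := by
    have := good_ne (X := X1.and X2) hwhole hg
    exact this
  have hca : cnt a (leaves X1 ++ leaves X2) = 1 :=
    (good_cnt (X := X1.and X2) hwhole hg).1
  have hcb : cnt b (leaves X1 ++ leaves X2) = 1 :=
    (good_cnt (X := X1.and X2) hwhole hg).2
  rw [cnt_append] at hca hcb
  have hwa : w ≠ a := by
    intro e; subst e
    have hp := rz_par hf1 w
    have hv := rz_vz hf1 w
    simp [cntL] at hp hv
    omega
  have hwb : w ≠ b := by
    intro e; subst e
    have hp := rz_par hf2 w
    have hv := rz_vz hf2 w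
    simp [cntL] at hp hv
    omega
  have hw1 : (cnt w (leaves X1) + 1) % 2 = 0 := by
    have hp := rz_par hf1 w
    simpa [cntL, Ne.symm hwa] using hp
  have hw2 : (cnt w (leaves X2) + 1) % 2 = 0 := by
    have hp := rz_par hf2 w
    simpa [cntL, Ne.symm hwb] using hp
  have hwg := hg w
  rw [cnt_append] at hwg
  simp [cntL, Ne.symm hwa, Ne.symm hwb] at hwg
  have hw1' : cnt w (leaves X1) = 1 := by omega
  have hw2' : cnt w (leaves X2) = 1 := by omega
  have ha1 : (cnt a (leaves X1) + 1) % 2 = 0 := by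
    have hp := rz_par hf1 a
    simpa [cntL, hwa] using hp
  have ha1' : cnt a (leaves X1) = 1 := by omega
  have ha2' : cnt a (leaves X2) = 0 := by omega
  have hb2 : (cnt b (leaves X2) + 1) % 2 = 0 := by
    have hp := rz_par hf2 b
    simpa [cntL, hwb] using hp
  have hb2' : cnt b (leaves X2) = 1 := by omega
  have hb1' : cnt b (leaves X1) = 0 := by omega
  have hcross : ∀ y, 1 ≤ cnt y (leaves X1) → 1 ≤ cnt y (leaves X2) → y = w := by
    intro y hy1 hy2
    by_contra hyw
    have hya : y ≠ a := by intro e; subst e; omega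
    have hyb : y ≠ b := by intro e; subst e; omega
    have hgy := hg y
    rw [cnt_append] at hgy
    simp [cntL, Ne.symm hya, Ne.symm hyb] at hgy
    have hp := rz_par hf1 y
    simp [cntL, Ne.symm hya, Ne.symm hyw] at hp
    omega
  refine ⟨hab, hwa, hwb, ha1', ha2', hb2', hb1', hw1', hw2', hcross, ?_, ?_⟩
  · intro x
    by_cases hxa : x = a
    · subst hxa; simp [cntL, hwa]; omega
    by_cases hxw : x = w
    · subst hxw; simp [cntL, Ne.symm hwa]; omega
    have hxa' : a ≠ x := fun h => hxa h.symm
    have hxw' : w ≠ x := fun h => hxw h.symm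
    have hp := rz_par hf1 x
    simp [cntL, hxa', hxw'] at hp ⊢
    have hgx := hg x
    rw [cnt_append] at hgx
    have hb : cnt x (leaves X1) + cnt x (leaves X2) ≤ 2 := by
      rcases hgx with h | h <;> omega
    omega
  · intro x
    by_cases hxw : x = w
    · subst hxw; simp [cntL, Ne.symm hwb]; omega
    by_cases hxb : x = b
    · subst hxb; simp [cntL, hwb]; omega
    have hxw' : w ≠ x := fun h => hxw h.symm
    have hxb' : b ≠ x := fun h => hxb h.symm
    have hp := rz_par hf2 x
    simp [cntL, hxw', hxb'] at hp ⊢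
    have hgx := hg x
    rw [cnt_append] at hgx
    have hb : cnt x (leaves X1) + cnt x (leaves X2) ≤ 2 := by
      rcases hgx with h | h <;> omega
    omega

end Aux7

section Aux8
variable {V : Type} [DecidableEq V]

local infix:50 " ≋ " => Eqv

theorem rz_conn {X : Fm V} {u v : V} {n : Ar V X (.rel u v)} (h : Rz u v n) :
    ∀ (_ : GoodL (leaves X) u v) (j : ℕ), 1 ≤ j → j < (leaves X).length →
      ∃ x, 1 ≤ cnt x ((leaves X).take j) ∧ 1 ≤ cnt x ((leaves X).drop j) := by
  induction h with
  | base_id u v =>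
      intro hg j h1 h2
      simp [leaves] at h2
      omega
  | base_s u v =>
      intro hg j h1 h2
      simp [leaves] at h2
      omega
  | @node X1 X2 u w v f1 f2 hf1 hf2 ih1 ih2 =>
      intro hg j h1 h2
      obtain ⟨hab, hwa, hwb, ha1, ha2, hb2, hb1, hw1, hw2, hcross, hg1, hg2⟩ :=
        node_facts hf1 hf2 hg
      have hlX : leaves (X1.and X2) = leaves X1 ++ leaves X2 := rfl
      have hlen : (leaves (X1.and X2)).length =
          (leaves X1).length + (leaves X2).length := by
        rw [hlX, List.length_append]
      rcases lt_trichotomy j (leaves X1).length with hj | hj | hj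
      · obtain ⟨x, hx1, hx2⟩ := ih1 hg1 j h1 hj
        refine ⟨x, ?_, ?_⟩
        · rw [hlX, List.take_append, cnt_append]
          omega
        · rw [hlX, List.drop_append, cnt_append]
          omega
      · refine ⟨w, ?_, ?_⟩
        · rw [hlX, List.take_append, cnt_append, hj]
          simp
          omega
        · rw [hlX, List.drop_append, cnt_append, hj]
          simp
          omega
      · obtain ⟨x, hx1, hx2⟩ := ih2 hg2 (j - (leaves X1).length) (by omega) (by omega)
        refine ⟨x, ?_, ?_⟩
        · rw [hlX, List.take_append, cnt_append]
          omega
        · rw [hlX, List.drop_append, cnt_append]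
          have : (leaves X1).drop j = [] := List.drop_eq_nil_of_le (by omega)
          rw [this]
          have h0 : cnt x ([] : List (Leaf V)) = 0 := rfl
          omega
  | @flip X1 X2 u w v f1 f2 hf1 hf2 ih1 ih2 =>
      intro hg j h1 h2
      obtain ⟨hab, hwa, hwb, ha1, ha2, hb2, hb1, hw1, hw2, hcross, hg1, hg2⟩ :=
        node_facts hf1 hf2 (goodL_swap hg)
      have hlX : leaves (X1.and X2) = leaves X1 ++ leaves X2 := rfl
      have hlen : (leaves (X1.and X2)).length =
          (leaves X1).length + (leaves X2).length := by
        rw [hlX, List.length_append]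
      rcases lt_trichotomy j (leaves X1).length with hj | hj | hj
      · obtain ⟨x, hx1, hx2⟩ := ih1 hg1 j h1 hj
        refine ⟨x, ?_, ?_⟩
        · rw [hlX, List.take_append, cnt_append]
          omega
        · rw [hlX, List.drop_append, cnt_append]
          omega
      · refine ⟨w, ?_, ?_⟩
        · rw [hlX, List.take_append, cnt_append, hj]
          simp
          omega
        · rw [hlX, List.drop_append, cnt_append, hj]
          simp
          omega
      · obtain ⟨x, hx1, hx2⟩ := ih2 hg2 (j - (leaves X1).length) (by omega) (by omega)
        refine ⟨x, ?_, ?_⟩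
        · rw [hlX, List.take_append, cnt_append]
          omega
        · rw [hlX, List.drop_append, cnt_append]
          have : (leaves X1).drop j = [] := List.drop_eq_nil_of_le (by omega)
          rw [this]
          have h0 : cnt x ([] : List (Leaf V)) = 0 := rfl
          omega

/-- rotation of a nested realization node -/
theorem rot {Y11 Y12 Y2 : Fm V} {u w1 w' v : V}
    (g11 : Ar V Y11 (.rel u w1)) (g12 : Ar V Y12 (.rel w1 w'))
    (g2 : Ar V Y2 (.rel w' v)) :
    (Ar.t u w' v).comp (((Ar.t u w1 w').comp (g11.tens g12)).tens g2) ≋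
      ((Ar.t u w1 v).comp
        (g11.tens ((Ar.t w1 w' v).comp (g12.tens g2)))).comp (Ar.bfrom Y11 Y12 Y2) := by
  calc (Ar.t u w' v).comp (((Ar.t u w1 w').comp (g11.tens g12)).tens g2)
      ≋ (Ar.t u w' v).comp (((Ar.t u w1 w').comp (g11.tens g12)).tens
          ((Ar.id (Fm.rel w' v)).comp g2)) :=
        Eqv.cr _ ((Eqv.refl _).congr_tens (Eqv.id_comp g2).symm)
    _ ≋ (Ar.t u w' v).comp (((Ar.t u w1 w').tens (Ar.id (Fm.rel w' v))).comp
          ((g11.tens g12).tens g2)) := Eqv.cr _ (Eqv.tens_comp _ _ _ _)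
    _ ≋ (Ar.t u w' v).comp (((Ar.t u w1 w').tens (Ar.id (Fm.rel w' v))).comp
          (((Ar.bto (Fm.rel u w1) (Fm.rel w1 w') (Fm.rel w' v)).comp
            (g11.tens (g12.tens g2))).comp (Ar.bfrom Y11 Y12 Y2))) := by
        refine Eqv.cr _ (Eqv.cr _ ?_)
        calc (g11.tens g12).tens g2
            ≋ ((g11.tens g12).tens g2).comp (Ar.id _) := (Eqv.comp_id _).symm
          _ ≋ ((g11.tens g12).tens g2).comp
              ((Ar.bto Y11 Y12 Y2).comp (Ar.bfrom Y11 Y12 Y2)) :=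
              Eqv.cr _ (Eqv.bb2 _ _ _).symm
          _ ≋ (((g11.tens g12).tens g2).comp (Ar.bto Y11 Y12 Y2)).comp
              (Ar.bfrom Y11 Y12 Y2) := (Eqv.comp_assoc _ _ _).symm
          _ ≋ ((Ar.bto (Fm.rel u w1) (Fm.rel w1 w') (Fm.rel w' v)).comp
              (g11.tens (g12.tens g2))).comp (Ar.bfrom Y11 Y12 Y2) :=
              Eqv.cl _ (Eqv.nat_b g11 g12 g2)
    _ ≋ ((Ar.t u w' v).comp
          (((Ar.t u w1 w').tens (Ar.id (Fm.rel w' v))).comp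
            (Ar.bto (Fm.rel u w1) (Fm.rel w1 w') (Fm.rel w' v)))).comp
          ((g11.tens (g12.tens g2)).comp (Ar.bfrom Y11 Y12 Y2)) := by
        have s1 : ((Ar.t u w1 w').tens (Ar.id (Fm.rel w' v))).comp
            (((Ar.bto (Fm.rel u w1) (Fm.rel w1 w') (Fm.rel w' v)).comp
              (g11.tens (g12.tens g2))).comp (Ar.bfrom Y11 Y12 Y2)) ≋
            (((Ar.t u w1 w').tens (Ar.id (Fm.rel w' v))).comp
              (Ar.bto (Fm.rel u w1) (Fm.rel w1 w') (Fm.rel w' v))).comp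
            ((g11.tens (g12.tens g2)).comp (Ar.bfrom Y11 Y12 Y2)) := by
          refine (Eqv.cr _ (Eqv.comp_assoc _ _ _)).trans ?_
          exact (Eqv.comp_assoc _ _ _).symm
        exact (Eqv.cr _ s1).trans (Eqv.comp_assoc _ _ _).symm
    _ ≋ ((Ar.t u w1 v).comp
          ((Ar.id (Fm.rel u w1)).tens (Ar.t w1 w' v))).comp
          ((g11.tens (g12.tens g2)).comp (Ar.bfrom Y11 Y12 Y2)) :=
        Eqv.cl _ (Eqv.tb u w1 w' v).symm
    _ ≋ (Ar.t u w1 v).comp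
          ((((Ar.id (Fm.rel u w1)).tens (Ar.t w1 w' v)).comp
            (g11.tens (g12.tens g2))).comp (Ar.bfrom Y11 Y12 Y2)) := by
        refine (Eqv.comp_assoc _ _ _).trans (Eqv.cr _ ?_)
        exact (Eqv.comp_assoc _ _ _).symm
    _ ≋ (Ar.t u w1 v).comp
          ((((Ar.id (Fm.rel u w1)).comp g11).tens
            ((Ar.t w1 w' v).comp (g12.tens g2))).comp (Ar.bfrom Y11 Y12 Y2)) :=
        Eqv.cr _ (Eqv.cl _ (Eqv.inter _ _ _ _))
    _ ≋ (Ar.t u w1 v).comp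
          ((g11.tens ((Ar.t w1 w' v).comp (g12.tens g2))).comp (Ar.bfrom Y11 Y12 Y2)) :=
        Eqv.cr _ (Eqv.cl _ ((Eqv.id_comp g11).congr_tens (Eqv.refl _)))
    _ ≋ ((Ar.t u w1 v).comp
          (g11.tens ((Ar.t w1 w' v).comp (g12.tens g2)))).comp (Ar.bfrom Y11 Y12 Y2) :=
        (Eqv.comp_assoc _ _ _).symm

theorem single_leaf {Y : Fm V} {l : Leaf V} (h : leaves Y = [l]) : Y = leafFm l := by
  cases Y with
  | rel a b => simp [leaves] at h; simp [leafFm, ← h]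
  | top => simp [leaves] at h; simp [leafFm, ← h]
  | and Y1 Y2 =>
      exfalso
      have h1 := leaves_len_pos Y1
      have h2 := leaves_len_pos Y2
      have := congrArg List.length h
      simp [leaves] at this
      omega

end Aux8

section Aux9
variable {V : Type} [DecidableEq V]

local infix:50 " ≋ " => Eqv

def lsp : Fm V → ℕ
  | .and X1 _ => (leaves X1).length
  | _ => 0

def topS : ∀ {A B : Fm V}, Ar V A B → ℕ
  | _, _, .comp (.s _ _) _ => 1
  | _, _, _ => 0

theorem cnt_take_le (x : V) (l : List (Leaf V)) (j : ℕ) :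
    cnt x (l.take j) ≤ cnt x l := by
  conv_rhs => rw [← List.take_append_drop j l]
  rw [cnt_append]
  omega

theorem cnt_drop_le (x : V) (l : List (Leaf V)) (j : ℕ) :
    cnt x (l.drop j) ≤ cnt x l := by
  conv_rhs => rw [← List.take_append_drop j l]
  rw [cnt_append]
  omega

theorem cnt_take_mono (x : V) (l : List (Leaf V)) {j j' : ℕ} (h : j ≤ j') :
    cnt x (l.take j) ≤ cnt x (l.take j') := by
  have he : l.take j = (l.take j').take j := by
    rw [List.take_take, min_eq_left h]
  rw [he]
  exact cnt_take_le x (l.take j') j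

theorem cnt_drop_anti (x : V) (l : List (Leaf V)) {j j' : ℕ} (h : j ≤ j') :
    cnt x (l.drop j') ≤ cnt x (l.drop j) := by
  have he : l.drop j' = (l.drop j).drop (j' - j) := by
    rw [List.drop_drop]
    congr 1
    omega
  rw [he]
  exact cnt_drop_le x (l.drop j) (j' - j)

theorem take_app_left (l1 l2 : List (Leaf V)) : (l1 ++ l2).take l1.length = l1 :=
  List.take_left

theorem drop_app_left (l1 l2 : List (Leaf V)) : (l1 ++ l2).drop l1.length = l2 :=
  List.drop_left

/-- the impossible configuration: a smaller realized split k, while the left child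
of a bigger split is a flipped node -/
theorem noflip {l11 l12 m2 : List (Leaf V)} {u w w' w1 : V} {Y12 : Fm V}
    (hl12 : leaves Y12 = l12) {g12 : Ar V Y12 (.rel w1 u)} (hg12 : Rz w1 u g12)
    (hgood12 : GoodL l12 w1 u)
    (k : ℕ) (hk : 1 ≤ k) (hkle : k < l11.length + l12.length)
    (hcross : ∀ y, 1 ≤ cnt y (((l11 ++ l12) ++ m2).take k) →
        1 ≤ cnt y (((l11 ++ l12) ++ m2).drop k) → y = w)
    (hu : 1 ≤ cnt u (((l11 ++ l12) ++ m2).take k))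
    (hw'11 : cnt w' l11 = 1) (hw'12 : cnt w' l12 = 0) (hw'm2 : 1 ≤ cnt w' m2)
    (hu11 : cnt u l11 = 0) : False := by
  set I := (l11 ++ l12) ++ m2 with hI
  rcases le_or_gt k l11.length with hA | hB
  · -- k ≤ |l11| : u lies beyond k1 ≥ k, contradiction with hu
    have h1 : cnt u (I.take k) ≤ cnt u (I.take l11.length) := cnt_take_mono u I hA
    have h2 : I.take l11.length = l11 := by
      rw [hI, List.append_assoc, take_app_left]
    rw [h2] at h1
    omega
  · -- |l11| < k
    have hlen12 : 1 ≤ l12.length := by omega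
    have hconn := rz_conn hg12 (by rw [hl12]; exact hgood12) (k - l11.length)
      (by omega) (by rw [hl12]; omega)
    rw [hl12] at hconn
    obtain ⟨x, hx1, hx2⟩ := hconn
    -- lift x's crossing to I
    have hIk : I.take k = l11 ++ l12.take (k - l11.length) := by
      rw [hI, List.append_assoc, List.take_append,
        List.take_append]
      have e1 : l11.take k = l11 := List.take_of_length_le (by omega)
      have e2 : m2.take (k - l11.length - l12.length) = [] := by
        have : k - l11.length - l12.length = 0 := by omega
        rw [this]; rfl
      rw [e1, e2, List.append_nil]
    have hIk' : I.drop k = l12.drop (k - l11.length) ++ m2 := by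
      rw [hI, List.append_assoc, List.drop_append,
        List.drop_append]
      have e1 : l11.drop k = [] := List.drop_eq_nil_of_le (by omega)
      have e2 : m2.drop (k - l11.length - l12.length) = m2 := by
        have : k - l11.length - l12.length = 0 := by omega
        rw [this, List.drop_zero]
      rw [e1, e2, List.nil_append]
    have hxw : x = w := by
      apply hcross
      · rw [hIk, cnt_append]; omega
      · rw [hIk', cnt_append]; omega
    rw [hxw] at hx1 hx2
    -- w occurs twice in l12
    have hw2 : 2 ≤ cnt w l12 := by
      have : l12 = l12.take (k - l11.length) ++ l12.drop (k - l11.length) :=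
        (List.take_append_drop _ _).symm
      rw [this, cnt_append]
      omega
    have hww' : w ≠ w' := by
      intro e; subst e; omega
    -- w' crosses k
    have hw'c : w' = w := by
      apply hcross
      · have h1 : cnt w' (I.take l11.length) ≤ cnt w' (I.take k) :=
          cnt_take_mono w' I (by omega)
        have h2 : I.take l11.length = l11 := by
          rw [hI, List.append_assoc, take_app_left]
        rw [h2] at h1
        omega
      · have h1 : cnt w' (I.drop (l11.length + l12.length)) ≤ cnt w' (I.drop k) :=
          cnt_drop_anti w' I (by omega)
        have h2 : I.drop (l11.length + l12.length) = m2 := by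
          rw [hI, ← List.length_append, drop_app_left]
        rw [h2] at h1
        omega
    exact hww' hw'c.symm

end Aux9

section Aux10
variable {V : Type} [DecidableEq V]

local infix:50 " ≋ " => Eqv

theorem uniq : ∀ (N : ℕ) (K : ℕ) {X Y : Fm V} {u v : V}
    {n : Ar V X (.rel u v)} {n' : Ar V Y (.rel u v)},
    Rz u v n → Rz u v n' → leaves X = leaves Y → GoodL (leaves X) u v →
    (leaves X).length ≤ N → lsp X + lsp Y + topS n + topS n' ≤ K →
    ∃ τ : Ar V X Y, PureB τ ∧ (n ≋ n'.comp τ) := by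
  intro N
  induction N using Nat.strong_induction_on with
  | _ N ihN =>
  intro K
  induction K using Nat.strong_induction_on with
  | _ K ihK =>
  intro X Y u v n n' hn hn' hl hg hN hK
  cases hn with
  | base_id =>
      have h1 : leaves Y = [Sum.inl (u, v)] := by rw [← hl]; rfl
      have hY : Y = Fm.rel u v := by simpa [leafFm] using single_leaf h1
      subst hY
      cases hn' with
      | base_id => exact ⟨Ar.id _, PureB.id _, (Eqv.comp_id _).symm⟩
      | base_s => exact (good_ne (Rz.base_id u u) hg rfl).elim
  | base_s =>
      have h1 : leaves Y = [Sum.inl (v, u)] := by rw [← hl]; rfl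
      have hY : Y = Fm.rel v u := by simpa [leafFm] using single_leaf h1
      subst hY
      cases hn' with
      | base_s => exact ⟨Ar.id _, PureB.id _, (Eqv.comp_id _).symm⟩
      | base_id => exact (good_ne (Rz.base_id u u) hg rfl).elim
  | @node X1 X2 _ w _ f1 f2 hf1 hf2 =>
      obtain ⟨hab, hwa, hwb, hu1, hu2, hv2, hv1, hw1, hw2c, hcross, hgl1, hgl2⟩ :=
        node_facts hf1 hf2 hg
      have hNlen : (leaves X1).length + (leaves X2).length ≤ N := by
        simpa [leaves] using hN
      have p1 := leaves_len_pos X1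
      have p2 := leaves_len_pos X2
      cases hn' with
      | base_id =>
          exfalso
          have hc := congrArg List.length hl
          simp [leaves] at hc
          omega
      | base_s =>
          exfalso
          have hc := congrArg List.length hl
          simp [leaves] at hc
          omega
      | @node Y1 Y2 _ w' _ g1 g2 hg1 hg2 =>
          have hg' : GoodL (leaves (Y1.and Y2)) u v := hl ▸ hg
          obtain ⟨_, hwa', hwb', hu1', hu2', hv2', hv1', hw1', hw2', hcross',
            hgl1', hgl2'⟩ := node_facts hg1 hg2 hg'
          have hl2 : leaves X1 ++ leaves X2 = leaves Y1 ++ leaves Y2 := hl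
          have q1 := leaves_len_pos Y1
          have q2 := leaves_len_pos Y2
          rcases lt_trichotomy (leaves X1).length (leaves Y1).length with hkk | hkk | hkk
          · -- k < k' : rotate n'
            cases hg1 with
            | base_id =>
                have hkk1 : (leaves X1).length < 1 := hkk
                omega
            | base_s =>
                have hkk1 : (leaves X1).length < 1 := hkk
                omega
            | @node Y11 Y12 _ w1 _ g11 g12 hg11 hg12 =>
                have r1 := leaves_len_pos Y11
                have r2 := leaves_len_pos Y12
                have hrot := rot g11 g12 g2
                have hn'' : Rz u v ((Ar.t u w1 v).comp
                    (g11.tens ((Ar.t w1 w' v).comp (g12.tens g2)))) :=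
                  Rz.node hg11 (Rz.node hg12 hg2)
                have hl'' : leaves (X1.and X2) = leaves (Y11.and (Y12.and Y2)) := by
                  rw [hl]; simp [leaves, List.append_assoc]
                have ht1 : topS ((Ar.t u w v).comp (f1.tens f2)) = 0 := rfl
                have ht2 : topS ((Ar.t u w' v).comp (((Ar.t u w1 w').comp (g11.tens g12)).tens g2)) = 0 := rfl
                have hm1 : lsp (X1.and X2) = (leaves X1).length := rfl
                have hm2 : lsp ((Y11.and Y12).and Y2) = (leaves Y11).length +
                    (leaves Y12).length := by simp [lsp, leaves]
                have hm3 : lsp (Y11.and (Y12.and Y2)) = (leaves Y11).length := rfl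
                obtain ⟨τ'', hτp, hτ⟩ := ihK
                  ((leaves X1).length + (leaves Y11).length)
                  (by
                    rw [hm1, hm2] at hK
                    rw [ht1] at hK
                    omega)
                  (Rz.node hf1 hf2) hn'' hl'' hg hN
                  (by
                    rw [hm1, hm3]
                    have ht3 : topS ((Ar.t u w v).comp (f1.tens f2)) = 0 := rfl
                    have ht4 : topS ((Ar.t u w1 v).comp
                      (g11.tens ((Ar.t w1 w' v).comp (g12.tens g2)))) = 0 := rfl
                    omega)
                refine ⟨(Ar.bto Y11 Y12 Y2).comp τ'', (PureB.bto _ _ _).comp hτp, ?_⟩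
                have hback :
                    ((Ar.t u w1 v).comp (g11.tens ((Ar.t w1 w' v).comp (g12.tens g2)))) ≋
                      (((Ar.t u w' v).comp ((((Ar.t u w1 w').comp (g11.tens g12))).tens g2)).comp (Ar.bto Y11 Y12 Y2)) := by
                  have s1 : (((Ar.t u w1 v).comp (g11.tens ((Ar.t w1 w' v).comp (g12.tens g2)))).comp (Ar.bfrom Y11 Y12 Y2)).comp (Ar.bto Y11 Y12 Y2) ≋
                      (((Ar.t u w' v).comp ((((Ar.t u w1 w').comp (g11.tens g12))).tens g2)).comp (Ar.bto Y11 Y12 Y2)) :=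
                    Eqv.cl _ hrot.symm
                  refine Eqv.trans ?_ s1
                  refine Eqv.trans (Eqv.comp_id _).symm ?_
                  refine Eqv.trans (Eqv.cr _ (Eqv.bb1 Y11 Y12 Y2).symm) ?_
                  exact (Eqv.comp_assoc _ _ _).symm
                have hfin : ((Ar.t u w v).comp (f1.tens f2)) ≋
                    (((Ar.t u w' v).comp ((((Ar.t u w1 w').comp (g11.tens g12))).tens g2)).comp ((Ar.bto Y11 Y12 Y2).comp τ'')) := by
                  refine Eqv.trans hτ ?_
                  refine Eqv.trans (Eqv.cl _ hback) ?_
                  exact Eqv.comp_assoc _ _ _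
                exact hfin
            | @flip Y11 Y12 _ w1 _ g11 g12 hg11 hg12 =>
                exfalso
                obtain ⟨_, _, _, hA1, hA2, hB2, hB1, hW1, hW2, hcrossI, hgi1, hgi2⟩ :=
                  node_facts hg11 hg12 (goodL_swap hgl1')
                have hl2' : leaves X1 ++ leaves X2 =
                    (leaves Y11 ++ leaves Y12) ++ leaves Y2 := hl
                have hkk' : (leaves X1).length <
                    (leaves Y11).length + (leaves Y12).length := by
                  simpa [leaves] using hkk
                refine noflip (Y12 := Y12) (l11 := leaves Y11) (m2 := leaves Y2)
                  (w := w) (w' := w') rfl hg12 hgi2 (leaves X1).length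
                  (by omega) hkk' ?_ ?_ hA1 hA2 hw2'.symm.le hB1
                · intro y hy1 hy2
                  rw [← hl2', take_app_left] at hy1
                  rw [← hl2', drop_app_left] at hy2
                  exact hcross y hy1 hy2
                · rw [← hl2', take_app_left]; omega
          · -- k = k'
            obtain ⟨e1, e2⟩ := List.append_inj hl2 hkk
            have hww : w' = w := by
              apply hcross
              · rw [e1]; omega
              · rw [e2]; omega
            subst hww
            obtain ⟨τ1, hp1, he1⟩ := ihN (leaves X1).length (by omega)
              (lsp X1 + lsp Y1 + topS f1 + topS g1) hf1 hg1 e1 hgl1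
              (le_refl _) (le_refl _)
            obtain ⟨τ2, hp2, he2⟩ := ihN (leaves X2).length (by omega)
              (lsp X2 + lsp Y2 + topS f2 + topS g2) hf2 hg2 e2 hgl2
              (le_refl _) (le_refl _)
            refine ⟨τ1.tens τ2, hp1.tens hp2, ?_⟩
            calc (Ar.t u w' v).comp (f1.tens f2)
                ≋ (Ar.t u w' v).comp ((g1.comp τ1).tens (g2.comp τ2)) :=
                  Eqv.cr _ (he1.congr_tens he2)
              _ ≋ (Ar.t u w' v).comp ((g1.tens g2).comp (τ1.tens τ2)) :=
                  Eqv.cr _ (Eqv.tens_comp _ _ _ _)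
              _ ≋ ((Ar.t u w' v).comp (g1.tens g2)).comp (τ1.tens τ2) :=
                  (Eqv.comp_assoc _ _ _).symm
          · -- k > k' : rotate n
            cases hf1 with
            | base_id =>
                have hkk1 : (leaves Y1).length < 1 := hkk
                omega
            | base_s =>
                have hkk1 : (leaves Y1).length < 1 := hkk
                omega
            | @node X11 X12 _ w1 _ f11 f12 hf11 hf12 =>
                have r1 := leaves_len_pos X11
                have r2 := leaves_len_pos X12
                have hrot := rot f11 f12 f2
                have hn'' : Rz u v ((Ar.t u w1 v).comp
                    (f11.tens ((Ar.t w1 w v).comp (f12.tens f2)))) :=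
                  Rz.node hf11 (Rz.node hf12 hf2)
                have hl'' : leaves (X11.and (X12.and X2)) = leaves (Y1.and Y2) := by
                  rw [← hl]; simp [leaves, List.append_assoc]
                have hg'' : GoodL (leaves (X11.and (X12.and X2))) u v := by
                  have he : leaves (X11.and (X12.and X2)) =
                      leaves ((X11.and X12).and X2) := by
                    simp [leaves, List.append_assoc]
                  rw [he]; exact hg
                have hleq : (leaves (X11.and (X12.and X2))).length =
                    (leaves ((X11.and X12).and X2)).length := by
                  simp [leaves]
                have hm1 : lsp ((X11.and X12).and X2) = (leaves X11).length +
                    (leaves X12).length := by simp [lsp, leaves]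
                have hm3 : lsp (X11.and (X12.and X2)) = (leaves X11).length := rfl
                have hm2 : lsp (Y1.and Y2) = (leaves Y1).length := rfl
                have ht1 : topS ((Ar.t u w v).comp
                    ((((Ar.t u w1 w).comp (f11.tens f12))).tens f2)) = 0 := rfl
                have ht2 : topS ((Ar.t u w' v).comp (g1.tens g2)) = 0 := rfl
                have ht4 : topS ((Ar.t u w1 v).comp
                    (f11.tens ((Ar.t w1 w v).comp (f12.tens f2)))) = 0 := rfl
                obtain ⟨τ0, hτp, hτ⟩ := ihK
                  ((leaves X11).length + (leaves Y1).length)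
                  (by rw [hm1, hm2, ht1, ht2] at hK; omega)
                  hn'' (Rz.node hg1 hg2) hl'' hg''
                  (by rw [hleq]; exact hN)
                  (by rw [hm3, hm2, ht4, ht2]; omega)
                refine ⟨τ0.comp (Ar.bfrom X11 X12 X2), hτp.comp (PureB.bfrom _ _ _), ?_⟩
                refine Eqv.trans hrot ?_
                refine Eqv.trans (Eqv.cl _ hτ) ?_
                exact Eqv.comp_assoc _ _ _
            | @flip X11 X12 _ w1 _ f11 f12 hf11 hf12 =>
                exfalso
                obtain ⟨_, _, _, hA1, hA2, hB2, hB1, hW1, hW2, hcrossI, hgi1, hgi2⟩ :=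
                  node_facts hf11 hf12 (goodL_swap hgl1)
                have hl2' : leaves Y1 ++ leaves Y2 =
                    (leaves X11 ++ leaves X12) ++ leaves X2 := hl.symm
                have hkk' : (leaves Y1).length <
                    (leaves X11).length + (leaves X12).length := by
                  simpa [leaves] using hkk
                refine noflip (Y12 := X12) (l11 := leaves X11) (m2 := leaves X2)
                  (w := w') (w' := w) rfl hf12 hgi2 (leaves Y1).length
                  (by omega) hkk' ?_ ?_ hA1 hA2 hw2c.symm.le hB1
                · intro y hy1 hy2
                  rw [← hl2', take_app_left] at hy1
                  rw [← hl2', drop_app_left] at hy2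
                  exact hcross' y hy1 hy2
                · rw [← hl2', take_app_left]; omega
      | @flip Y1 Y2 _ w' _ g1 g2 hg1 hg2 =>
          exfalso
          have hg' : GoodL (leaves (Y1.and Y2)) v u := goodL_swap (hl ▸ hg)
          obtain ⟨_, _, _, hv1', hv2', hu2', hu1', _, _, _, _, _⟩ :=
            node_facts hg1 hg2 hg'
          have hl2 : leaves X1 ++ leaves X2 = leaves Y1 ++ leaves Y2 := hl
          rcases le_or_gt (leaves X1).length (leaves Y1).length with hA | hB
          · have h1 : cnt u ((leaves Y1 ++ leaves Y2).take (leaves X1).length) ≤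
                cnt u ((leaves Y1 ++ leaves Y2).take (leaves Y1).length) :=
              cnt_take_mono u _ hA
            rw [take_app_left, ← hl2, take_app_left] at h1
            omega
          · have h1 : cnt v ((leaves Y1 ++ leaves Y2).drop (leaves X1).length) ≤
                cnt v ((leaves Y1 ++ leaves Y2).drop (leaves Y1).length) :=
              cnt_drop_anti v _ (by omega)
            rw [drop_app_left, ← hl2, drop_app_left] at h1
            omega
  | @flip X1 X2 _ w _ f1 f2 hf1 hf2 =>
      obtain ⟨hab, hwa, hwb, hv1, hv2, hu2, hu1, hw1, hw2c, hcross, hgl1, hgl2⟩ :=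
        node_facts hf1 hf2 (goodL_swap hg)
      have p1 := leaves_len_pos X1
      have p2 := leaves_len_pos X2
      cases hn' with
      | base_id =>
          exfalso
          have hc := congrArg List.length hl
          simp [leaves] at hc
          omega
      | base_s =>
          exfalso
          have hc := congrArg List.length hl
          simp [leaves] at hc
          omega
      | @node Y1 Y2 _ w' _ g1 g2 hg1 hg2 =>
          exfalso
          have hg' : GoodL (leaves (Y1.and Y2)) u v := hl ▸ hg
          obtain ⟨_, _, _, hu1', hu2', hv2', hv1', _, _, _, _, _⟩ :=
            node_facts hg1 hg2 hg'
          have hl2 : leaves X1 ++ leaves X2 = leaves Y1 ++ leaves Y2 := hl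
          rcases le_or_gt (leaves Y1).length (leaves X1).length with hA | hB
          · have h1 : cnt u ((leaves X1 ++ leaves X2).take (leaves Y1).length) ≤
                cnt u ((leaves X1 ++ leaves X2).take (leaves X1).length) :=
              cnt_take_mono u _ hA
            rw [take_app_left, hl2, take_app_left] at h1
            omega
          · have h1 : cnt v ((leaves X1 ++ leaves X2).drop (leaves Y1).length) ≤
                cnt v ((leaves X1 ++ leaves X2).drop (leaves X1).length) :=
              cnt_drop_anti v _ (by omega)
            rw [drop_app_left, hl2, drop_app_left] at h1
            omega
      | @flip Y1 Y2 _ w' _ g1 g2 hg1 hg2 =>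
          have hc : Rz v u ((Ar.t v w u).comp (f1.tens f2)) := Rz.node hf1 hf2
          have hc' : Rz v u ((Ar.t v w' u).comp (g1.tens g2)) := Rz.node hg1 hg2
          have ht1 : topS ((Ar.s v u).comp ((Ar.t v w u).comp (f1.tens f2))) = 1 := rfl
          have ht2 : topS ((Ar.s v u).comp ((Ar.t v w' u).comp (g1.tens g2))) = 1 := rfl
          have ht3 : topS ((Ar.t v w u).comp (f1.tens f2)) = 0 := rfl
          have ht4 : topS ((Ar.t v w' u).comp (g1.tens g2)) = 0 := rfl
          obtain ⟨τ, hτp, hτ⟩ := ihK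
            (lsp (X1.and X2) + lsp (Y1.and Y2)) (by omega)
            hc hc' hl (goodL_swap hg) hN (by omega)
          refine ⟨τ, hτp, ?_⟩
          calc (Ar.s v u).comp ((Ar.t v w u).comp (f1.tens f2))
              ≋ (Ar.s v u).comp (((Ar.t v w' u).comp (g1.tens g2)).comp τ) :=
                Eqv.cr _ hτ
            _ ≋ ((Ar.s v u).comp ((Ar.t v w' u).comp (g1.tens g2))).comp τ :=
                (Eqv.comp_assoc _ _ _).symm

end Aux10

section Aux11
variable {V : Type} [DecidableEq V]

local infix:50 " ≋ " => Eqv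

def GoodF (l : List (Leaf V)) (B : Fm V) : Prop :=
  ∀ x, cnt x l + countF x B = 0 ∨ cnt x l + countF x B = 2

theorem cl_parL {X B : Fm V} {f : Ar V X B} (h : Cl f) (x : V) :
    (cnt x (leaves X) + countF x B) % 2 = 0 := by
  have := par h x
  rwa [countF_eq_cnt] at this

theorem cl_vzL {X B : Fm V} {f : Ar V X B} (h : Cl f) (x : V)
    (h0 : cnt x (leaves X) = 0) : countF x B = 0 := by
  have := vz h x
  rw [countF_eq_cnt] at this
  exact this h0

theorem cl_ctop {X B : Fm V} {f : Ar V X B} (h : Cl f) :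
    ctop (leaves X) = ntop B := by
  rw [← ntop_eq_ctop]
  exact ntop_pres h

def natoms : Fm V → ℕ
  | .rel _ _ => 1
  | .top => 0
  | .and A B => natoms A + natoms B

theorem natoms_pos_var (B : Fm V) (h : 1 ≤ natoms B) : ∃ x, 1 ≤ countF x B := by
  induction B with
  | rel a b =>
      refine ⟨a, ?_⟩
      simp [countF]
  | top => simp [natoms] at h
  | and B1 B2 ih1 ih2 =>
      have : 1 ≤ natoms B1 ∨ 1 ≤ natoms B2 := by
        simp [natoms] at h; omega
      rcases this with h1 | h2
      · obtain ⟨x, hx⟩ := ih1 h1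
        exact ⟨x, by simp [countF]; omega⟩
      · obtain ⟨x, hx⟩ := ih2 h2
        exact ⟨x, by simp [countF]; omega⟩

theorem ctop_natoms : ∀ C : Fm V, natoms C + ctop (leaves C) = (leaves C).length
  | .rel a b => rfl
  | .top => rfl
  | .and A B => by
      have h1 := ctop_natoms A
      have h2 := ctop_natoms B
      simp [natoms, leaves, ctop_append]
      omega

theorem nf_natoms0 {C B : Fm V} {p : Ar V C B} (hp : Nf p) (h : natoms B = 0) :
    natoms C = 0 := by
  induction hp with
  | top => rfl
  | atom _ => simp [natoms] at h
  | and _ _ ih1 ih2 =>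
      simp [natoms] at h ⊢
      exact ⟨ih1 h.1, ih2 h.2⟩

theorem goodF_split {X1 X2 B1 B2 : Fm V} {p1 : Ar V X1 B1} {p2 : Ar V X2 B2}
    (h1 : Cl p1) (h2 : Cl p2)
    (hg : GoodF (leaves X1 ++ leaves X2) (B1.and B2)) :
    GoodF (leaves X1) B1 ∧ GoodF (leaves X2) B2 := by
  constructor <;> intro x <;>
  · have e1 := cl_parL h1 x
    have e2 := cl_parL h2 x
    have e3 := hg x
    rw [cnt_append] at e3
    have e4 : countF x (B1.and B2) = countF x B1 + countF x B2 := rfl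
    rw [e4] at e3
    omega

theorem split_helper {P S lc1 lc2 : List (Leaf V)} (h : P ++ S = lc1 ++ lc2)
    (hle : S.length ≤ lc2.length) :
    ∃ P2, lc2 = P2 ++ S ∧ P = lc1 ++ P2 := by
  have hlen : P.length + S.length = lc1.length + lc2.length := by
    have := congrArg List.length h
    simpa [List.length_append] using this
  refine ⟨lc2.take (P.length - lc1.length), ?_, ?_⟩
  · have hS : S = (lc1 ++ lc2).drop P.length := by
      rw [← h, List.drop_append]
      have : P.drop P.length = [] := by simp
      rw [this, List.nil_append]
      have : P.length - P.length = 0 := by omega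
      rw [this, List.drop_zero]
    rw [hS, List.drop_append]
    have : lc1.drop P.length = [] := List.drop_eq_nil_of_le (by omega)
    rw [this, List.nil_append, ← List.take_append_drop (P.length - lc1.length) lc2]
    congr 1
    · rw [List.take_append]
      have : (lc2.take (P.length - lc1.length)).length = P.length - lc1.length := by
        rw [List.length_take]; omega
      rw [this]
      have e2 : (lc2.drop (P.length - lc1.length)).take
          (P.length - lc1.length - (P.length - lc1.length)) = [] := by
        have : P.length - lc1.length - (P.length - lc1.length) = 0 := by omega
        rw [this]; rfl
      rw [e2, List.append_nil]
      rw [List.take_take, min_self]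
    · rw [List.drop_append]
      have h3 : (lc2.take (P.length - lc1.length)).length = P.length - lc1.length := by
        rw [List.length_take]; omega
      rw [h3]
      have h4 : (lc2.take (P.length - lc1.length)).drop (P.length - lc1.length) = [] :=
        List.drop_eq_nil_of_le (by rw [h3])
      rw [h4, List.nil_append]
      have : P.length - lc1.length - (P.length - lc1.length) = 0 := by omega
      rw [this, List.drop_zero]
  · have hP : P = (lc1 ++ lc2).take P.length := by
      rw [← h, List.take_append]
      have h5 : P.take P.length = P := by simp
      rw [h5]
      have h6 : P.length - P.length = 0 := by omega
      rw [h6]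
      simp
    rw [List.take_append] at hP
    rw [show List.take P.length lc1 = lc1 from List.take_of_length_le (by omega)] at hP
    exact hP

/-- no nonempty all-atom self-contained suffix of the source of a normal form -/
theorem suff {Y1 B1 : Fm V} {p : Ar V Y1 B1} (hp : Nf p) :
    ∀ (P S : List (Leaf V)), leaves Y1 = P ++ S → P ≠ [] → S ≠ [] → ctop S = 0 →
    GoodF (leaves Y1) B1 →
    (∀ x, 1 ≤ cnt x S → cnt x S = 2 ∧ cnt x P = 0 ∧ countF x B1 = 0) → False := by
  induction hp with
  | top =>
      intro P S hPS hP hS _ _ _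
      have := congrArg List.length hPS
      simp [leaves] at this
      have p1 : 1 ≤ P.length := List.length_pos_iff.mpr hP
      have p2 : 1 ≤ S.length := List.length_pos_iff.mpr hS
      omega
  | @atom X u v f hrz =>
      intro P S hPS hP hS _ hgood hself
      have p1 : 1 ≤ P.length := List.length_pos_iff.mpr hP
      have p2 : 1 ≤ S.length := List.length_pos_iff.mpr hS
      have hlen : (leaves X).length = P.length + S.length := by
        rw [hPS, List.length_append]
      obtain ⟨x, hx1, hx2⟩ := rz_conn hrz hgood P.length (by omega) (by omega)
      rw [hPS, take_app_left] at hx1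
      rw [hPS, drop_app_left] at hx2
      have := (hself x hx2).2.1
      omega
  | @and C1 C2 B11 B12 p1 p2 hp1 hp2 ih1 ih2 =>
      intro P S hPS hP hS htopS hgood hself
      have hgs := goodF_split hp1.cl hp2.cl hgood
      have hl2 : P ++ S = leaves C1 ++ leaves C2 := hPS.symm
      rcases le_or_gt S.length (leaves C2).length with hle | hgt
      · obtain ⟨P2, e1, e2⟩ := split_helper hl2 hle
        rcases Nat.eq_zero_or_pos P2.length with hP2 | hP2
        · -- S = leaves C2
          have hP2nil : P2 = [] := List.length_eq_zero_iff.mp hP2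
          subst hP2nil
          rw [List.nil_append] at e1
          rcases Nat.eq_zero_or_pos (natoms B12) with hnb | hnb
          · have hna := nf_natoms0 hp2 hnb
            have := ctop_natoms C2
            rw [hna] at this
            have hlen2 := leaves_len_pos C2
            rw [e1] at this hlen2
            omega
          · obtain ⟨x, hx⟩ := natoms_pos_var B12 hnb
            have hc2 : 1 ≤ cnt x (leaves C2) := by
              by_contra hc
              have h0 : cnt x (leaves C2) = 0 := by omega
              have := cl_vzL hp2.cl x h0
              omega
            rw [e1] at hc2
            have := (hself x hc2).2.2
            have hB : countF x (B11.and B12) = countF x B11 + countF x B12 := rfl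
            omega
        · refine ih2 P2 S e1 (by intro hc; rw [hc] at hP2; simp at hP2) hS htopS
            hgs.2 ?_
          intro x hx
          obtain ⟨c1, c2, c3⟩ := hself x hx
          refine ⟨c1, ?_, ?_⟩
          · rw [e2, cnt_append] at c2; omega
          · have hB : countF x (B11.and B12) = countF x B11 + countF x B12 := rfl
            rw [hB] at c3; omega
      · -- leaves C2 is a proper suffix of S
        obtain ⟨S1, e1, e2⟩ := split_helper hl2.symm (by omega)
        -- e1 : S = S1 ++ leaves C2, e2 : leaves C1 = P ++ S1
        rcases Nat.eq_zero_or_pos (natoms B12) with hnb | hnb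
        · have hna := nf_natoms0 hp2 hnb
          have hct := ctop_natoms C2
          rw [hna] at hct
          have hlen2 := leaves_len_pos C2
          rw [e1, ctop_append] at htopS
          omega
        · obtain ⟨x, hx⟩ := natoms_pos_var B12 hnb
          have hc2 : 1 ≤ cnt x (leaves C2) := by
            by_contra hc
            have h0 : cnt x (leaves C2) = 0 := by omega
            have := cl_vzL hp2.cl x h0
            omega
          have hcS : 1 ≤ cnt x S := by
            rw [e1, cnt_append]; omega
          have := (hself x hcS).2.2
          have hB : countF x (B11.and B12) = countF x B11 + countF x B12 := rfl
          omega

end Aux11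

section Aux12
variable {V : Type} [DecidableEq V]

local infix:50 " ≋ " => Eqv

theorem main' : ∀ (B : Fm V), ∀ {X Y : Fm V} {n : Ar V X B} {n' : Ar V Y B},
    Nf n → Nf n' → leaves X = leaves Y → GoodF (leaves X) B →
    ∃ τ : Ar V X Y, PureB τ ∧ (n ≋ n'.comp τ) := by
  intro B
  induction B with
  | top =>
      intro X Y n n' hn hn' hl hg
      cases hn with
      | top =>
          cases hn' with
          | top => exact ⟨Ar.id _, PureB.id _, (Eqv.comp_id _).symm⟩
  | rel u v =>
      intro X Y n n' hn hn' hl hg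
      cases hn with
      | atom hrz =>
          cases hn' with
          | atom hrz' =>
              exact uniq (leaves X).length (lsp X + lsp Y + topS n + topS n')
                hrz hrz' hl hg (le_refl _) (le_refl _)
  | and B1 B2 ih1 ih2 =>
      intro X Y n n' hn hn' hl hg
      cases hn with
      | and hn1 hn2 =>
      rename_i X1 X2 n1 n2
      cases hn' with
      | and hn1' hn2' =>
      rename_i Y1 Y2 n1' n2'
      have hl2 : leaves X1 ++ leaves X2 = leaves Y1 ++ leaves Y2 := hl
      have hgg2 : GoodF (leaves X1 ++ leaves X2) (B1.and B2) := hg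
      obtain ⟨hgx1, hgx2⟩ := goodF_split hn1.cl hn2.cl hgg2
      have hgy : GoodF (leaves Y1 ++ leaves Y2) (B1.and B2) := hl2 ▸ hgg2
      obtain ⟨hgy1, hgy2⟩ := goodF_split hn1'.cl hn2'.cl hgy
      have p1 := leaves_len_pos X1
      have p2 := leaves_len_pos X2
      have q1 := leaves_len_pos Y1
      have q2 := leaves_len_pos Y2
      have hlen : (leaves X1).length + (leaves X2).length =
          (leaves Y1).length + (leaves Y2).length := by
        have := congrArg List.length hl2
        simpa [List.length_append] using this
      have hkk : (leaves X1).length = (leaves Y1).length := by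
        rcases lt_trichotomy (leaves X1).length (leaves Y1).length with hlt | he | hgt
        · exfalso
          set k := (leaves X1).length with hkdef
          have hPX : (leaves Y1).take k = leaves X1 := by
            have h1 : (leaves Y1 ++ leaves Y2).take k = (leaves Y1).take k := by
              rw [List.take_append]
              have h0 : k - (leaves Y1).length = 0 := by omega
              rw [h0]
              simp
            rw [← h1, ← hl2, take_app_left]
          have hX2 : leaves X2 = (leaves Y1).drop k ++ leaves Y2 := by
            have h1 : (leaves Y1 ++ leaves Y2).drop k =
                (leaves Y1).drop k ++ leaves Y2 := by
              rw [List.drop_append]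
              have h0 : k - (leaves Y1).length = 0 := by omega
              rw [h0, List.drop_zero]
            rw [← h1, ← hl2, drop_app_left]
          apply suff hn1' ((leaves Y1).take k) ((leaves Y1).drop k)
            (List.take_append_drop _ _).symm
            (by rw [hPX]; exact leaves_ne_nil X1)
            (by
              intro hc
              have := congrArg List.length hc
              simp [List.length_drop] at this
              omega)
            (by
              have e1 : ctop (leaves X1) = ntop B1 := cl_ctop hn1.cl
              have e2 : ctop (leaves Y1) = ntop B1 := cl_ctop hn1'.cl
              have e3 : ctop (leaves Y1) = ctop ((leaves Y1).take k) +
                  ctop ((leaves Y1).drop k) := by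
                rw [← ctop_append, List.take_append_drop]
              rw [hPX] at e3
              omega)
            hgy1
          intro x hx
          have ha1 := cl_parL hn1.cl x
          have hb1 := cl_parL hn1'.cl x
          have hGG : cnt x (leaves X1) + cnt x (leaves X2) +
              (countF x B1 + countF x B2) = 0 ∨
              cnt x (leaves X1) + cnt x (leaves X2) +
              (countF x B1 + countF x B2) = 2 := by
            have hgg := hgg2 x
            rw [cnt_append] at hgg
            exact hgg
          have hsplit : cnt x (leaves Y1) = cnt x ((leaves Y1).take k) +
              cnt x ((leaves Y1).drop k) := by
            rw [← cnt_append, List.take_append_drop]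
          have hXtake : cnt x (leaves X1) = cnt x ((leaves Y1).take k) := by
            rw [hPX]
          have hX2' : cnt x (leaves X2) = cnt x ((leaves Y1).drop k) +
              cnt x (leaves Y2) := by
            rw [hX2, cnt_append]
          refine ⟨by omega, ?_, by omega⟩
          rw [hPX]
          omega
        · exact he
        · exfalso
          set k := (leaves Y1).length with hkdef
          have hPX : (leaves X1).take k = leaves Y1 := by
            have h1 : (leaves X1 ++ leaves X2).take k = (leaves X1).take k := by
              rw [List.take_append]
              have h0 : k - (leaves X1).length = 0 := by omega
              rw [h0]
              simp
            rw [← h1, hl2, take_app_left]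
          have hX2 : leaves Y2 = (leaves X1).drop k ++ leaves X2 := by
            have h1 : (leaves X1 ++ leaves X2).drop k =
                (leaves X1).drop k ++ leaves X2 := by
              rw [List.drop_append]
              have h0 : k - (leaves X1).length = 0 := by omega
              rw [h0, List.drop_zero]
            rw [← h1, hl2, drop_app_left]
          apply suff hn1 ((leaves X1).take k) ((leaves X1).drop k)
            (List.take_append_drop _ _).symm
            (by rw [hPX]; exact leaves_ne_nil Y1)
            (by
              intro hc
              have := congrArg List.length hc
              simp [List.length_drop] at this
              omega)
            (by
              have e1 : ctop (leaves X1) = ntop B1 := cl_ctop hn1.cl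
              have e2 : ctop (leaves Y1) = ntop B1 := cl_ctop hn1'.cl
              have e3 : ctop (leaves X1) = ctop ((leaves X1).take k) +
                  ctop ((leaves X1).drop k) := by
                rw [← ctop_append, List.take_append_drop]
              rw [hPX] at e3
              omega)
            hgx1
          intro x hx
          have ha1 := cl_parL hn1.cl x
          have hb1 := cl_parL hn1'.cl x
          have hGG : cnt x (leaves X1) + cnt x (leaves X2) +
              (countF x B1 + countF x B2) = 0 ∨
              cnt x (leaves X1) + cnt x (leaves X2) +
              (countF x B1 + countF x B2) = 2 := by
            have hgg := hgg2 x
            rw [cnt_append] at hgg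
            exact hgg
          have hsplit : cnt x (leaves X1) = cnt x ((leaves X1).take k) +
              cnt x ((leaves X1).drop k) := by
            rw [← cnt_append, List.take_append_drop]
          have hYtake : cnt x (leaves Y1) = cnt x ((leaves X1).take k) := by
            rw [hPX]
          refine ⟨by omega, ?_, by omega⟩
          rw [hPX]
          omega
      obtain ⟨e1, e2⟩ := List.append_inj hl2 hkk
      obtain ⟨τ1, hp1, he1⟩ := ih1 hn1 hn1' e1 hgx1
      obtain ⟨τ2, hp2, he2⟩ := ih2 hn2 hn2' e2 hgx2
      refine ⟨τ1.tens τ2, hp1.tens hp2, ?_⟩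
      calc n1.tens n2 ≋ (n1'.comp τ1).tens (n2'.comp τ2) := he1.congr_tens he2
        _ ≋ (n1'.tens n2').comp (τ1.tens τ2) := Eqv.tens_comp _ _ _ _

end Aux12
/-- Auxiliary Lemma. -/
theorem stmt13 {V : Type} [DecidableEq V] {A B : Fm V} (f g : Ar V A B)
    (hdf : Developed f) (hdg : Developed g)
    (hrf : rLess f) (hrg : rLess g)
    (hsf : dsLess f) (hsg : dsLess g)
    (hdiv : Diversified A B)
    (hnf : sNormal f) (hng : sNormal g) :
    Eqv f g := by
  obtain ⟨A1, nf, ρf, hnf1, hpf, hef⟩ := norm f ⟨hrf, hsf⟩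
  obtain ⟨A2, ng, ρg, hng1, hpg, heg⟩ := norm g ⟨hrg, hsg⟩
  have hlf : leaves A = leaves A1 := hpf.leaves_eq
  have hlg : leaves A = leaves A2 := hpg.leaves_eq
  have hleq : leaves A1 = leaves A2 := hlf.symm.trans hlg
  have hgood : GoodF (leaves A1) B := by
    intro x
    have hd := hdiv x
    rw [countF_eq_cnt, hlf] at hd
    exact hd
  obtain ⟨τ, hτp, hτ⟩ := main' B hnf1 hng1 hleq hgood
  have hcoh : Eqv (τ.comp ρf) ρg := pureb_coh (hτp.comp hpf) hpg
  exact (((hef.trans (Eqv.cl _ hτ)).trans (Eqv.comp_assoc _ _ _)).trans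
    (Eqv.cr _ hcoh)).trans heg.symm

end DP
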